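/- arXiv:math/0302344 — 3 statements merged into one kernel-verified Lean document; each statement's English description precedes it below -/
import Mathlib

section
/- Let F be a figure with equilibrium function eq and let C be a strongly critical elementary cycle of G_F. Then for every tiling T of F, C is a cycle of G_T and C does not cut any tile of T, i.e., χ_T(a)=0 for every arc a of C. -/
open Classical

noncomputable section

abbrev Vtx : Type := ℤ × ℤ
abbrev GArc : Type := Vtx × Vtx

/-- `a` is an arc of the grid graph `Λ⁺`: its endpoints differ by a unit vector. -/
def IsArc (a : GArc) : Prop :=
  (a.2.1 - a.1.1).natAbs + (a.2.2 - a.1.2).natAbs = 1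

/-- reversal of an arc -/
def arev (a : GArc) : GArc := (a.2, a.1)

/-- `+1` if the cell with lower-left corner `c` is black, `-1` if it is white
(checkerboard coloring). -/
def colorSign (c : Vtx) : ℤ := if (c.1 + c.2) % 2 = 0 then 1 else -1

/-- spin of an arc: `+1` if a traveler along the arc has a white cell on its left,
`-1` otherwise. -/
def sp (a : GArc) : ℤ :=
  colorSign a.1 * ((a.2.2 - a.1.2) ^ 2 - (a.2.1 - a.1.1) ^ 2)

/-- the arcs of a path/cycle given by its list of vertices -/
def arcsOf (C : List Vtx) : List GArc := C.zip C.tail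

/-- sum of a function `g` on arcs over all the arcs of `C` (with multiplicity) -/
def sumOn (g : GArc → ℤ) (C : List Vtx) : ℤ := ((arcsOf C).map g).sum

/-- a (closed) cycle of the grid -/
def IsCycle (C : List Vtx) : Prop :=
  2 ≤ C.length ∧ C.head? = C.getLast? ∧ ∀ a ∈ arcsOf C, IsArc a

/-- an elementary cycle: no repeated vertex except the endpoints -/
def IsElemCycle (C : List Vtx) : Prop := IsCycle C ∧ C.dropLast.Nodup

/-- contribution of an arc to the winding number of a cycle around the center of
cell `c` (crossings of the horizontal ray going East from the center of `c`). -/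
def windTerm (c : Vtx) (a : GArc) : ℤ :=
  if a.1.1 = a.2.1 ∧ c.1 < a.1.1 ∧ min a.1.2 a.2.2 = c.2 then a.2.2 - a.1.2 else 0

/-- winding number of the cycle `C` around the center of the cell `c` -/
def wind (C : List Vtx) (c : Vtx) : ℤ := sumOn (windTerm c) C

/-- a cycle is clockwise when its winding number around any cell is nonpositive
(`-1` on enclosed cells, `0` elsewhere) -/
def IsClockwise (C : List Vtx) : Prop := ∀ c : Vtx, wind C c ≤ 0

/-- a cell is enclosed by `C` when the winding number of `C` around it is nonzero -/
def Encloses (C : List Vtx) (c : Vtx) : Prop := wind C c ≠ 0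

/-- number of black cells minus number of white cells enclosed by a clockwise cycle -/
def Dis (C : List Vtx) : ℤ := -∑ᶠ c : Vtx, wind C c * colorSign c

/-- 4-adjacency of cells (shared edge) -/
def adj4 (c c' : Vtx) : Prop := (c'.1 - c.1).natAbs + (c'.2 - c.2).natAbs = 1

/-- 8-adjacency of cells (shared vertex at least) -/
def adj8 (c c' : Vtx) : Prop := c ≠ c' ∧ (c'.1 - c.1).natAbs ≤ 1 ∧ (c'.2 - c.2).natAbs ≤ 1

/-- a figure: a nonempty, finite, 4-connected set of cells such that no vertex has
all its incident edges on the boundary (no diagonal pinch, so no vertex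
duplication is needed). -/
def IsFigure (F : Finset Vtx) : Prop :=
  F.Nonempty ∧
  (∀ c ∈ F, ∀ c' ∈ F, Relation.ReflTransGen (fun x y => x ∈ F ∧ y ∈ F ∧ adj4 x y) c c') ∧
  (∀ x y : ℤ,
    ¬((x - 1, y - 1) ∈ F ∧ (x, y) ∈ F ∧ (x, y - 1) ∉ F ∧ (x - 1, y) ∉ F) ∧
    ¬((x, y - 1) ∈ F ∧ (x - 1, y) ∈ F ∧ (x - 1, y - 1) ∉ F ∧ (x, y) ∉ F))

/-- one of the two cells adjacent to the edge `[a]` -/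
def cellA (a : GArc) : Vtx :=
  if a.1.2 = a.2.2 then (min a.1.1 a.2.1, a.1.2) else (a.1.1, min a.1.2 a.2.2)

/-- the other cell adjacent to the edge `[a]` -/
def cellB (a : GArc) : Vtx :=
  if a.1.2 = a.2.2 then (min a.1.1 a.2.1, a.1.2 - 1) else (a.1.1 - 1, min a.1.2 a.2.2)

/-- arcs of the graph `G_F`: the edge `[a]` is a side of a cell of `F` -/
def ArcF (F : Finset Vtx) (a : GArc) : Prop := IsArc a ∧ (cellA a ∈ F ∨ cellB a ∈ F)

/-- boundary arcs of `F`: exactly one of the two adjacent cells is in `F` -/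
def BoundaryArcF (F : Finset Vtx) (a : GArc) : Prop :=
  IsArc a ∧ ¬(cellA a ∈ F ↔ cellB a ∈ F)

/-- interior arcs of `F`: both adjacent cells are in `F` -/
def InteriorArcF (F : Finset Vtx) (a : GArc) : Prop :=
  IsArc a ∧ cellA a ∈ F ∧ cellB a ∈ F

/-- `v` is a corner of the cell with lower-left corner `c` -/
def isCorner (v c : Vtx) : Prop :=
  (v.1 = c.1 ∨ v.1 = c.1 + 1) ∧ (v.2 = c.2 ∨ v.2 = c.2 + 1)

/-- vertices of `G_F`: the corners of the cells of `F` -/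
def VF (F : Finset Vtx) : Set Vtx := {v | ∃ c ∈ F, isCorner v c}

/-- a cycle of the graph `G_F` -/
def IsCycleF (F : Finset Vtx) (C : List Vtx) : Prop :=
  2 ≤ C.length ∧ C.head? = C.getLast? ∧ ∀ a ∈ arcsOf C, ArcF F a

/-- an elementary cycle of the graph `G_F` -/
def IsElemCycleF (F : Finset Vtx) (C : List Vtx) : Prop :=
  IsCycleF F C ∧ C.dropLast.Nodup

/-- number of black cells of `F` minus number of white cells of `F` enclosed by
the clockwise cycle `C` -/
def DisF (F : Finset Vtx) (C : List Vtx) : ℤ := -∑ c ∈ F, wind C c * colorSign c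

/-- `ef` is skew-symmetric on the arcs of `G_F` -/
def IsSkewOnF (F : Finset Vtx) (ef : GArc → ℤ) : Prop :=
  ∀ a, ArcF F a → ef (arev a) = -ef a

/-- an equilibrium function of the figure `F` -/
def IsEquilibrium (F : Finset Vtx) (ef : GArc → ℤ) : Prop :=
  IsSkewOnF F ef ∧
  ∀ C, IsElemCycleF F C → IsClockwise C → sumOn sp C + sumOn ef C = 4 * DisF F C

/-- the four sides of the cell `c`, as canonically oriented arcs -/
def sides (c : Vtx) : List GArc :=
  [((c.1, c.2), (c.1 + 1, c.2)), ((c.1, c.2 + 1), (c.1 + 1, c.2 + 1)),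
   ((c.1, c.2), (c.1, c.2 + 1)), ((c.1 + 1, c.2), (c.1 + 1, c.2 + 1))]

/-- a domino tiling of `F`, encoded by the symmetric set `D` of the arcs whose
underlying edges are the central axes of its dominoes: every central axis has
both of its adjacent cells in `F` (dominoes are included in `F`), and every cell
of `F` is covered by exactly one domino (exactly one of its sides is a central
axis): no overlap and no gap. -/
def IsTiling (F : Finset Vtx) (D : Set GArc) : Prop :=
  (∀ a ∈ D, arev a ∈ D) ∧
  (∀ a ∈ D, IsArc a ∧ cellA a ∈ F ∧ cellB a ∈ F) ∧
  (∀ c ∈ F, ∃! a, a ∈ sides c ∧ a ∈ D)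

/-- characteristic function of a tiling: `1` on central axes, `0` elsewhere -/
def chi (D : Set GArc) (a : GArc) : ℤ := if a ∈ D then 1 else 0

/-- the height difference function of a tiling -/
def gT (ef : GArc → ℤ) (D : Set GArc) (a : GArc) : ℤ :=
  ef a - sp a + 2 * sp a * (1 - 2 * chi D a)

/-- the function `t`: `eq(a)-sp(a)+2` on interior arcs, `eq(a)+sp(a)` on boundary arcs -/
def tArc (F : Finset Vtx) (ef : GArc → ℤ) (a : GArc) : ℤ :=
  if cellA a ∈ F ∧ cellB a ∈ F then ef a - sp a + 2 else ef a + sp a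

/-- the function `b`: `eq(a)-sp(a)-2` on interior arcs, `eq(a)+sp(a)` on boundary arcs -/
def bArc (F : Finset Vtx) (ef : GArc → ℤ) (a : GArc) : ℤ :=
  if cellA a ∈ F ∧ cellB a ∈ F then ef a - sp a - 2 else ef a + sp a

/-- the 8-connected component of the cell `c` in the complement of `F` -/
def comp8 (F : Finset Vtx) (c : Vtx) : Set Vtx :=
  {c' | Relation.ReflTransGen (fun x y => x ∉ F ∧ y ∉ F ∧ adj8 x y) c c'}

/-- `c` belongs to a hole of `F` (a finite 8-connected component of the complement) -/
def IsHoleCell (F : Finset Vtx) (c : Vtx) : Prop := c ∉ F ∧ (comp8 F c).Finite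

/-- `c` belongs to `H_∞`, the infinite 8-connected component of the complement -/
def IsHinfCell (F : Finset Vtx) (c : Vtx) : Prop := c ∉ F ∧ ¬(comp8 F c).Finite

/-- `w` is a vertex of `V_F` on the boundary of `H_∞` -/
def OnOuterBoundary (F : Finset Vtx) (w : Vtx) : Prop :=
  w ∈ VF F ∧ ∃ c, IsHinfCell F c ∧ isCorner w c

/-- vertices on the boundary of `F` -/
def Vb (F : Finset Vtx) : Set Vtx :=
  {v | (∃ c ∈ F, isCorner v c) ∧ ∃ c, c ∉ F ∧ isCorner v c}

/-- `h` belongs to the class `H_F` of height functions -/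
def InHF (F : Finset Vtx) (ef : GArc → ℤ) (w0 : Vtx) (h : Vtx → ℤ) : Prop :=
  h w0 = 0 ∧ ∀ a, ArcF F a →
    (h a.2 - h a.1 = bArc F ef a ∨ h a.2 - h a.1 = tArc F ef a)

/-- `h` is the height function induced by the tiling `D` (based at `w0`) -/
def IsHeightOf (F : Finset Vtx) (ef : GArc → ℤ) (D : Set GArc) (w0 : Vtx)
    (h : Vtx → ℤ) : Prop :=
  h w0 = 0 ∧ ∀ a, ArcF F a → h a.2 - h a.1 = gT ef D a

/-- a critical cycle: an elementary cycle of `G_F` with `t(C) = 0` -/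
def CriticalCycle (F : Finset Vtx) (ef : GArc → ℤ) (C : List Vtx) : Prop :=
  IsElemCycleF F C ∧ sumOn (tArc F ef) C = 0

/-- a strongly critical cycle: critical, and `sp(a) = 1` on all its interior arcs -/
def StronglyCriticalCycle (F : Finset Vtx) (ef : GArc → ℤ) (C : List Vtx) : Prop :=
  CriticalCycle F ef C ∧ ∀ a ∈ arcsOf C, InteriorArcF F a → sp a = 1

/-- two vertices are critically equivalent when some critical cycle passes
through both -/
def critRel (F : Finset Vtx) (ef : GArc → ℤ) (v v' : Vtx) : Prop :=
  ∃ C, CriticalCycle F ef C ∧ v ∈ C ∧ v' ∈ C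

/-- the forced component of the vertex `v` (class of the equivalence relation
generated by critical equivalence) -/
def fcomp (F : Finset Vtx) (ef : GArc → ℤ) (v : Vtx) : Set Vtx :=
  {v' | v' ∈ VF F ∧ Relation.EqvGen (critRel F ef) v v'}

/-- `S` is a forced component of `F` -/
def IsForcedComponent (F : Finset Vtx) (ef : GArc → ℤ) (S : Set Vtx) : Prop :=
  ∃ v ∈ VF F, S = fcomp F ef v

/-- `a` is an arc of the graph `G_T` of the tiling `D` -/
def GTArc (F : Finset Vtx) (ef : GArc → ℤ) (D : Set GArc) (a : GArc) : Prop :=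
  ArcF F a ∧ gT ef D a = tArc F ef a

/-- there is a directed path in `G_T` from `u` to `v` -/
def GTReach (F : Finset Vtx) (ef : GArc → ℤ) (D : Set GArc) (u v : Vtx) : Prop :=
  Relation.ReflTransGen (fun x y => GTArc F ef D (x, y)) u v

/-- the result of an upward flip on the component `S`: add `4` on `S` -/
def flipUpAt (S : Set Vtx) (h : Vtx → ℤ) : Vtx → ℤ :=
  fun v => h v + S.indicator (fun _ => (4 : ℤ)) v

/-- the result of a downward flip on the component `S`: subtract `4` on `S` -/
def flipDownAt (S : Set Vtx) (h : Vtx → ℤ) : Vtx → ℤ :=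
  fun v => h v - S.indicator (fun _ => (4 : ℤ)) v

/-- `|h(v_S) - h'(v_S)|` for a representative `v_S` of `S` -/
def compDiff (h h' : Vtx → ℤ) (S : Set Vtx) : ℤ :=
  if hS : S.Nonempty then |h hS.some - h' hS.some| else 0

/-- the distance `Δ(h,h') = Σ_U |h(v_U) - h'(v_U)|` over forced components `U` -/
def Delta (F : Finset Vtx) (ef : GArc → ℤ) (h h' : Vtx → ℤ) : ℤ :=
  ∑ᶠ S ∈ {S : Set Vtx | IsForcedComponent F ef S}, compDiff h h' S

/-- a sequence of `n` allowed upward flips at forced components distinct from `U_∞` -/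
def UpFlipSeq (F : Finset Vtx) (ef : GArc → ℤ) (w0 : Vtx) (f : ℕ → Vtx → ℤ)
    (n : ℕ) : Prop :=
  ∀ i < n, ∃ S, IsForcedComponent F ef S ∧ S ≠ fcomp F ef w0 ∧
    InHF F ef w0 (f i) ∧ InHF F ef w0 (f (i + 1)) ∧ f (i + 1) = flipUpAt S (f i)

/-- a sequence of `n` allowed (upward or downward) flips, flipping at step `i`
the forced component `s i` (distinct from `U_∞`) -/
def FlipSeq (F : Finset Vtx) (ef : GArc → ℤ) (w0 : Vtx) (f : ℕ → Vtx → ℤ)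
    (s : ℕ → Set Vtx) (n : ℕ) : Prop :=
  ∀ i < n, IsForcedComponent F ef (s i) ∧ s i ≠ fcomp F ef w0 ∧
    InHF F ef w0 (f i) ∧ InHF F ef w0 (f (i + 1)) ∧
    (f (i + 1) = flipUpAt (s i) (f i) ∨ f (i + 1) = flipDownAt (s i) (f i))

/-- the four arcs of the two horizontal edges through `v` (central axes of the
pair of vertical dominoes covering the 2×2 square centered at `v`) -/
def hPairAxes (v : Vtx) : Set GArc :=
  {((v.1 - 1, v.2), v), (v, (v.1 - 1, v.2)), (v, (v.1 + 1, v.2)), ((v.1 + 1, v.2), v)}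

/-- the four arcs of the two vertical edges through `v` (central axes of the
pair of horizontal dominoes covering the 2×2 square centered at `v`) -/
def vPairAxes (v : Vtx) : Set GArc :=
  {((v.1, v.2 - 1), v), (v, (v.1, v.2 - 1)), (v, (v.1, v.2 + 1)), ((v.1, v.2 + 1), v)}

/-- a local flip: replace the pair of dominoes covering a 2×2 square by the
other pair covering the same square -/
def LocalFlip (D D' : Set GArc) : Prop :=
  ∃ v : Vtx, (hPairAxes v ⊆ D ∧ D' = (D \ hPairAxes v) ∪ vPairAxes v) ∨
             (vPairAxes v ⊆ D ∧ D' = (D \ vPairAxes v) ∪ hPairAxes v)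

/-- a sequence of `n` local flips between tilings of `F` -/
def LocalFlipSeq (F : Finset Vtx) (g : ℕ → Set GArc) (n : ℕ) : Prop :=
  ∀ i < n, IsTiling F (g i) ∧ IsTiling F (g (i + 1)) ∧ LocalFlip (g i) (g (i + 1))

/-- `h` is a maximal element of `(H_F, ≤)` -/
def MaximalInHF (F : Finset Vtx) (ef : GArc → ℤ) (w0 : Vtx) (h : Vtx → ℤ) : Prop :=
  InHF F ef w0 h ∧ ∀ h', InHF F ef w0 h' →
    (∀ v ∈ VF F, h v ≤ h' v) → ∀ v ∈ VF F, h' v = h v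

/-- `h` is a minimal element of `(H_F, ≤)` -/
def MinimalInHF (F : Finset Vtx) (ef : GArc → ℤ) (w0 : Vtx) (h : Vtx → ℤ) : Prop :=
  InHF F ef w0 h ∧ ∀ h', InHF F ef w0 h' →
    (∀ v ∈ VF F, h' v ≤ h v) → ∀ v ∈ VF F, h' v = h v

/-- an elementary cycle of `G_F` enclosing a single cell of `F` -/
def AroundSingleCell (F : Finset Vtx) (C : List Vtx) : Prop :=
  IsElemCycleF F C ∧ ∃ c ∈ F, ∀ c' : Vtx, wind C c' ≠ 0 ↔ c' = c

/-- a cycle of `G_F` following clockwise the boundary of a hole of `F`: it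
winds `-1` around each cell of the hole and `0` around every other cell -/
def IsClockwiseHoleContour (F : Finset Vtx) (C : List Vtx) : Prop :=
  IsElemCycleF F C ∧ ∃ c₀, IsHoleCell F c₀ ∧
    (∀ c ∈ comp8 F c₀, wind C c = -1) ∧ (∀ c ∉ comp8 F c₀, wind C c = 0)

end
noncomputable section AuxProof

/-! ### Basic arc and color lemmas -/

lemma colorSign_cases (c : Vtx) : colorSign c = 1 ∨ colorSign c = -1 := by
  unfold colorSign; split <;> simp

lemma colorSign_flip {u v : Vtx} (h : (u.1 + u.2) % 2 ≠ (v.1 + v.2) % 2) :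
    colorSign u = -colorSign v := by
  unfold colorSign; split_ifs <;> omega

lemma isArc_cases {u v : Vtx} (h : IsArc (u, v)) :
    v = (u.1 + 1, u.2) ∨ v = (u.1 - 1, u.2) ∨ v = (u.1, u.2 + 1) ∨ v = (u.1, u.2 - 1) := by
  obtain ⟨x1, y1⟩ := u; obtain ⟨x2, y2⟩ := v
  simp only [IsArc] at h
  simp only [Prod.mk.injEq]
  omega

lemma isArc_cases' {u v : Vtx} (h : IsArc (u, v)) :
    u = (v.1 - 1, v.2) ∨ u = (v.1 + 1, v.2) ∨ u = (v.1, v.2 - 1) ∨ u = (v.1, v.2 + 1) := by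
  obtain ⟨x1, y1⟩ := u; obtain ⟨x2, y2⟩ := v
  simp only [IsArc] at h
  simp only [Prod.mk.injEq]
  omega

lemma arev_arev (a : GArc) : arev (arev a) = a := rfl

lemma isArc_arev {a : GArc} (h : IsArc a) : IsArc (arev a) := by
  obtain ⟨⟨x1, y1⟩, ⟨x2, y2⟩⟩ := a
  unfold IsArc arev at *; simp at h ⊢; omega

lemma sp_arev {a : GArc} (h : IsArc a) : sp (arev a) = -sp a := by
  obtain ⟨u, v⟩ := a
  have hc : colorSign v = -colorSign u := by
    apply colorSign_flip
    unfold IsArc at h; simp at h; omega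
  unfold sp arev
  simp only []
  rw [hc]; ring

lemma cellA_arev {a : GArc} (h : IsArc a) : cellA (arev a) = cellA a := by
  obtain ⟨⟨x1, y1⟩, ⟨x2, y2⟩⟩ := a
  unfold IsArc at h; simp at h
  unfold cellA arev
  split_ifs with h1 h2 <;> simp_all [Prod.ext_iff] <;> omega

lemma cellB_arev {a : GArc} (h : IsArc a) : cellB (arev a) = cellB a := by
  obtain ⟨⟨x1, y1⟩, ⟨x2, y2⟩⟩ := a
  unfold IsArc at h; simp at h
  unfold cellB arev
  split_ifs with h1 h2 <;> simp_all [Prod.ext_iff] <;> omega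

lemma arcF_arev {F : Finset Vtx} {a : GArc} (h : ArcF F a) : ArcF F (arev a) := by
  obtain ⟨h1, h2⟩ := h
  exact ⟨isArc_arev h1, by rw [cellA_arev h1, cellB_arev h1]; exact h2⟩

lemma windTerm_arev (c : Vtx) (a : GArc) : windTerm c (arev a) = -windTerm c a := by
  obtain ⟨⟨x1, y1⟩, ⟨x2, y2⟩⟩ := a
  unfold windTerm arev
  simp only [min_comm]
  split_ifs with h1 h2 h2 <;> simp_all <;> omega

end AuxProof
noncomputable section AuxProof2

/-! ### sumOn and arcsOf machinery -/

lemma arcsOf_nil : arcsOf ([] : List Vtx) = [] := rfl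
lemma arcsOf_single (v : Vtx) : arcsOf [v] = [] := rfl
lemma arcsOf_cons_cons (v w : Vtx) (l : List Vtx) :
    arcsOf (v :: w :: l) = (v, w) :: arcsOf (w :: l) := rfl

lemma sumOn_nil (f : GArc → ℤ) : sumOn f [] = 0 := rfl
lemma sumOn_single (f : GArc → ℤ) (v : Vtx) : sumOn f [v] = 0 := rfl
lemma sumOn_cons_cons (f : GArc → ℤ) (v w : Vtx) (l : List Vtx) :
    sumOn f (v :: w :: l) = f (v, w) + sumOn f (w :: l) := by
  simp [sumOn, arcsOf_cons_cons]

lemma sumOn_congr {f g : GArc → ℤ} {C : List Vtx}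
    (h : ∀ a ∈ arcsOf C, f a = g a) : sumOn f C = sumOn g C := by
  unfold sumOn
  congr 1
  exact List.map_congr_left h

lemma sumOn_add (f g : GArc → ℤ) (C : List Vtx) :
    sumOn (fun a => f a + g a) C = sumOn f C + sumOn g C := by
  unfold sumOn
  induction arcsOf C with
  | nil => simp
  | cons a l ih => simp [ih]; ring

lemma sumOn_sub (f g : GArc → ℤ) (C : List Vtx) :
    sumOn (fun a => f a - g a) C = sumOn f C - sumOn g C := by
  unfold sumOn
  induction arcsOf C with
  | nil => simp
  | cons a l ih => simp [ih]; ring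

lemma sumOn_zero_of (f : GArc → ℤ) (C : List Vtx) (h : ∀ a ∈ arcsOf C, f a = 0) :
    sumOn f C = 0 := by
  rw [sumOn_congr h]
  unfold sumOn
  induction arcsOf C with
  | nil => rfl
  | cons a l ih => simp_all

/-- telescoping along a path -/
lemma sumOn_grad (H : Vtx → ℤ) (f : GArc → ℤ) :
    ∀ (l : List Vtx) (v : Vtx), (∀ a ∈ arcsOf (v :: l), f a = H a.2 - H a.1) →
      sumOn f (v :: l) = H ((v :: l).getLast (by simp)) - H v := by
  intro l
  induction l with
  | nil => intro v _; simp [sumOn_single]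
  | cons w l ih =>
    intro v hf
    rw [sumOn_cons_cons]
    rw [ih w (fun a ha => hf a (by rw [arcsOf_cons_cons]; exact List.mem_cons_of_mem _ ha))]
    rw [hf (v, w) (by rw [arcsOf_cons_cons]; exact List.mem_cons_self)]
    have hg : (v :: w :: l).getLast (by simp) = (w :: l).getLast (by simp) :=
      List.getLast_cons (by simp)
    rw [hg]
    ring

/-- telescoping along a closed path -/
lemma sumOn_closed (H : Vtx → ℤ) (f : GArc → ℤ) (C : List Vtx) (hne : C ≠ [])
    (hcl : C.head? = C.getLast?)
    (hf : ∀ a ∈ arcsOf C, f a = H a.2 - H a.1) : sumOn f C = 0 := by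
  obtain ⟨v, l, rfl⟩ := List.exists_cons_of_ne_nil hne
  rw [sumOn_grad H f l v hf]
  have hv : v = (v :: l).getLast (by simp) := by
    have h1 : (v :: l).getLast? = some ((v :: l).getLast (by simp)) :=
      List.getLast?_eq_getLast (by simp)
    rw [← hcl] at h1
    simpa using h1
  rw [← hv]
  ring

end AuxProof2
noncomputable section AuxProof3

/-! ### reverse machinery and range form -/

lemma list_sum_map_neg (f : GArc → ℤ) (l : List GArc) :
    (l.map (fun a => -f a)).sum = -((l.map f).sum) := by
  induction l with
  | nil => simp
  | cons a l ih => simp [ih]; ring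

lemma getLast_reverse_head (w : Vtx) (t : List Vtx) :
    ((w :: t).reverse).getLast (by simp) = w := by
  have h1 : ((w :: t).reverse).getLast? = some (((w :: t).reverse).getLast (by simp)) :=
    List.getLast?_eq_getLast (by simp)
  rw [List.getLast?_reverse] at h1
  simp only [List.head?_cons, Option.some.injEq] at h1
  exact h1.symm

lemma arcsOf_concat : ∀ (l : List Vtx) (h : l ≠ []) (x : Vtx),
    arcsOf (l ++ [x]) = arcsOf l ++ [(l.getLast h, x)] := by
  intro l
  induction l with
  | nil => intro h; simp at h
  | cons a t ih =>
    intro _ x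
    cases t with
    | nil => simp [arcsOf_cons_cons, arcsOf_single, arcsOf_nil]
    | cons b t' =>
      have h0 : (a :: b :: t') ++ [x] = a :: b :: (t' ++ [x]) := by simp
      rw [h0, arcsOf_cons_cons a b (t' ++ [x])]
      have h1 : (b :: t') ++ [x] = b :: (t' ++ [x]) := by simp
      rw [← h1, ih (by simp) x, arcsOf_cons_cons a b t']
      simp [List.getLast_cons]

lemma arcsOf_reverse : ∀ (l : List Vtx), arcsOf l.reverse = ((arcsOf l).reverse).map arev := by
  intro l
  induction l with
  | nil => rfl
  | cons v t ih =>
    cases t with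
    | nil => rfl
    | cons w t' =>
      rw [List.reverse_cons]
      rw [arcsOf_concat _ (by simp) v]
      rw [ih]
      rw [arcsOf_cons_cons]
      rw [getLast_reverse_head]
      simp [arev]

lemma mem_arcsOf_reverse {a : GArc} {l : List Vtx} (h : a ∈ arcsOf l.reverse) :
    arev a ∈ arcsOf l := by
  rw [arcsOf_reverse] at h
  obtain ⟨b, hb, rfl⟩ := List.mem_map.mp h
  rw [arev_arev]
  exact List.mem_reverse.mp hb

lemma sumOn_reverse (f : GArc → ℤ) (l : List Vtx)
    (hskew : ∀ a ∈ arcsOf l, f (arev a) = -f a) : sumOn f l.reverse = -sumOn f l := by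
  unfold sumOn
  rw [arcsOf_reverse, List.map_map, List.map_reverse, List.sum_reverse]
  have : ((arcsOf l).map (f ∘ arev)).sum = ((arcsOf l).map (fun a => -f a)).sum := by
    congr 1
    exact List.map_congr_left (fun a ha => hskew a ha)
  rw [this, list_sum_map_neg]

lemma wind_reverse (C : List Vtx) (c : Vtx) : wind C.reverse c = -wind C c := by
  unfold wind
  exact sumOn_reverse _ _ (fun a _ => windTerm_arev c a)

lemma DisF_reverse (F : Finset Vtx) (C : List Vtx) : DisF F C.reverse = -DisF F C := by
  unfold DisF
  rw [neg_neg]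
  rw [← Finset.sum_neg_distrib]
  apply Finset.sum_congr rfl
  intro c _
  rw [wind_reverse]
  ring

lemma dropLast_cons_cons (v w : Vtx) (t : List Vtx) :
    (v :: w :: t).dropLast = v :: (w :: t).dropLast := rfl

lemma nodup_reverse_dropLast (C : List Vtx) (hne : C ≠ [])
    (hcl : C.head? = C.getLast?) (h : C.dropLast.Nodup) : C.reverse.dropLast.Nodup := by
  obtain ⟨v, l, rfl⟩ := List.exists_cons_of_ne_nil hne
  have hdrop : ((v :: l).reverse).dropLast = l.reverse := by
    rw [List.reverse_cons]
    simp
  rw [hdrop, List.nodup_reverse]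
  cases l with
  | nil => simp
  | cons w t =>
    -- v = getLast (w :: t)
    have hv : v = (w :: t).getLast (by simp) := by
      have h1 : (v :: w :: t).getLast? = some ((w :: t).getLast (by simp)) := by
        rw [List.getLast?_eq_getLast (l := v :: w :: t) (by simp)]
        congr 1
      rw [← hcl] at h1
      simpa using h1
    rw [dropLast_cons_cons] at h
    have h2 := List.dropLast_append_getLast (l := w :: t) (by simp)
    rw [← h2, ← hv]
    rcases List.nodup_cons.mp h with ⟨hnm, hnd⟩
    refine (List.nodup_append).mpr ⟨hnd, by simp, ?_⟩
    intro x hx y hy hxy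
    rw [List.mem_singleton] at hy
    exact hnm (hy ▸ hxy ▸ hx)

/-- range form of sumOn -/
lemma sumOn_eq_range (f : GArc → ℤ) :
    ∀ (C : List Vtx), sumOn f C =
      ∑ j ∈ Finset.range (C.length - 1), f (C.getD j (0,0), C.getD (j+1) (0,0)) := by
  intro C
  induction C with
  | nil => simp [sumOn_nil]
  | cons v t ih =>
    cases t with
    | nil => simp [sumOn_single]
    | cons w t' =>
      rw [sumOn_cons_cons, ih]
      have hlen : (v :: w :: t').length - 1 = ((w :: t').length - 1) + 1 := by simp
      rw [hlen, Finset.sum_range_succ']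
      simp [List.getD_cons_succ, List.getD_cons_zero]
      ring

end AuxProof3
noncomputable section AuxProof4

/-! ### cumulative sums over ℤ and the discrete Poincaré lemma -/

def cum (g : ℤ → ℤ) (y : ℤ) : ℤ :=
  if 0 ≤ y then ∑ j ∈ Finset.range y.toNat, g j
  else -∑ j ∈ Finset.range (-y).toNat, g (-(j + 1 : ℤ))

lemma cum_zero (g : ℤ → ℤ) : cum g 0 = 0 := by simp [cum]

lemma cum_succ (g : ℤ → ℤ) (y : ℤ) : cum g (y + 1) = cum g y + g y := by
  unfold cum
  by_cases h : 0 ≤ y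
  · rw [if_pos (by omega), if_pos h]
    have h1 : (y + 1).toNat = y.toNat + 1 := by omega
    rw [h1, Finset.sum_range_succ]
    have h2 : ((y.toNat : ℤ)) = y := by omega
    rw [h2]
  · by_cases h' : y = -1
    · subst h'
      norm_num [Finset.sum_range_one]
    · rw [if_neg (by omega), if_neg h]
      have h1 : (-y).toNat = (-(y + 1)).toNat + 1 := by omega
      rw [h1, Finset.sum_range_succ]
      have h2 : (-(((-(y + 1)).toNat : ℤ) + 1)) = y := by omega
      rw [h2]
      ring

/-- a generic discrete potential for an edge-function -/
def pot (ρ : GArc → ℤ) (v : Vtx) : ℤ :=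
  cum (fun x => ρ ((x, 0), (x + 1, 0))) v.1 + cum (fun y => ρ ((v.1, y), (v.1, y + 1))) v.2

lemma pot_vert (ρ : GArc → ℤ) (x y : ℤ) :
    pot ρ (x, y + 1) - pot ρ (x, y) = ρ ((x, y), (x, y + 1)) := by
  unfold pot
  simp only []
  rw [cum_succ]
  ring

/-- cell condition: the (counterclockwise) sum of ρ around any unit cell vanishes -/
def CellZero (ρ : GArc → ℤ) : Prop :=
  ∀ p q : ℤ, ρ ((p, q), (p + 1, q)) + ρ ((p + 1, q), (p + 1, q + 1))
    - ρ ((p, q + 1), (p + 1, q + 1)) - ρ ((p, q), (p, q + 1)) = 0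

lemma pot_horiz (ρ : GArc → ℤ) (hcell : CellZero ρ) (x : ℤ) :
    ∀ y : ℤ, pot ρ (x + 1, y) - pot ρ (x, y) = ρ ((x, y), (x + 1, y)) := by
  intro y
  induction y using Int.induction_on with
  | zero =>
    unfold pot
    simp only [cum_zero]
    rw [cum_succ]
    simp [cum_zero]
  | succ k ih =>
    have hc := hcell x k
    have v1 := pot_vert ρ (x + 1) k
    have v2 := pot_vert ρ x k
    push_cast at ih ⊢
    linarith
  | pred k ih =>
    have hc := hcell x (-(k : ℤ) - 1)
    have v1 := pot_vert ρ (x + 1) (-(k : ℤ) - 1)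
    have v2 := pot_vert ρ x (-(k : ℤ) - 1)
    have e1 : (-(k : ℤ) - 1) + 1 = -(k : ℤ) := by ring
    rw [e1] at v1 v2 hc
    push_cast at ih ⊢
    linarith

lemma pot_grad (ρ : GArc → ℤ) (hcell : CellZero ρ)
    (hskew : ∀ a, IsArc a → ρ (arev a) = -ρ a) :
    ∀ a : GArc, IsArc a → ρ a = pot ρ a.2 - pot ρ a.1 := by
  intro a ha
  obtain ⟨u, v⟩ := a
  obtain ⟨p, q⟩ := u
  rcases isArc_cases ha with rfl | rfl | rfl | rfl <;> simp only []
  · exact (pot_horiz ρ hcell p q).symm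
  · have h1 := pot_horiz ρ hcell (p - 1) q
    have e1 : p - 1 + 1 = p := by ring
    rw [e1] at h1
    have hs := hskew ((p - 1, q), (p, q)) (by unfold IsArc; simp)
    unfold arev at hs
    simp only [] at hs h1 ⊢
    linarith
  · exact (pot_vert ρ p q).symm
  · have h1 := pot_vert ρ p (q - 1)
    have e1 : q - 1 + 1 = q := by ring
    rw [e1] at h1
    have hs := hskew ((p, q - 1), (p, q)) (by unfold IsArc; simp)
    unfold arev at hs
    simp only [] at hs h1 ⊢
    linarith

/-- the discrete Poincaré lemma: a function with zero curl sums to zero on closed paths -/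
lemma sumOn_closed_of_cellZero (ρ : GArc → ℤ) (hcell : CellZero ρ)
    (hskew : ∀ a, IsArc a → ρ (arev a) = -ρ a)
    (C : List Vtx) (hne : C ≠ []) (hcl : C.head? = C.getLast?)
    (harcs : ∀ a ∈ arcsOf C, IsArc a) : sumOn ρ C = 0 :=
  sumOn_closed (pot ρ) ρ C hne hcl (fun a ha => by
    rw [pot_grad ρ hcell hskew a (harcs a ha)])

end AuxProof4
noncomputable section AuxProof5

/-! ### winding number differences across edges -/

/-- signed crossings of the vertical edge between cells `(p,q)` (west) and `(p+1,q)` (east) -/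
def crossV (p q : ℤ) (a : GArc) : ℤ :=
  if a.1.1 = a.2.1 ∧ a.1.1 = p + 1 ∧ min a.1.2 a.2.2 = q then a.2.2 - a.1.2 else 0

/-- signed crossings of the horizontal edge between cells `(p,q)` (south) and `(p,q+1)` (north) -/
def crossH (p q : ℤ) (a : GArc) : ℤ :=
  if a.1.2 = a.2.2 ∧ a.1.2 = q + 1 ∧ min a.1.1 a.2.1 = p then a.1.1 - a.2.1 else 0

lemma windTerm_sub_crossV (p q : ℤ) (a : GArc) :
    windTerm (p, q) a - windTerm (p + 1, q) a = crossV p q a := by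
  obtain ⟨⟨x1, y1⟩, ⟨x2, y2⟩⟩ := a
  unfold windTerm crossV
  simp only []
  split_ifs <;> omega

/-- wind difference across a vertical edge, for any cycle -/
lemma wind_diff_V (C : List Vtx) (p q : ℤ) :
    wind C (p, q) - wind C (p + 1, q) = sumOn (crossV p q) C := by
  unfold wind
  rw [← sumOn_sub]
  exact sumOn_congr (fun a _ => windTerm_sub_crossV p q a)

lemma crossH_cell (p q : ℤ) :
    CellZero (fun a => windTerm (p, q) a - windTerm (p, q + 1) a - crossH p q a) := by
  intro P Q
  simp only []
  unfold windTerm crossH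
  norm_num
  split_ifs <;> omega

lemma crossH_skew (p q : ℤ) :
    ∀ a, IsArc a → (fun a => windTerm (p, q) a - windTerm (p, q + 1) a - crossH p q a) (arev a)
      = -((fun a => windTerm (p, q) a - windTerm (p, q + 1) a - crossH p q a) a) := by
  intro a _
  simp only []
  rw [windTerm_arev, windTerm_arev]
  have : crossH p q (arev a) = -crossH p q a := by
    obtain ⟨⟨x1, y1⟩, ⟨x2, y2⟩⟩ := a
    unfold crossH arev
    simp only []
    split_ifs <;> omega
  rw [this]
  ring

/-- wind difference across a horizontal edge, for a closed cycle -/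
lemma wind_diff_H (C : List Vtx) (hne : C ≠ []) (hcl : C.head? = C.getLast?)
    (harcs : ∀ a ∈ arcsOf C, IsArc a) (p q : ℤ) :
    wind C (p, q) - wind C (p, q + 1) = sumOn (crossH p q) C := by
  have h0 := sumOn_closed_of_cellZero _ (crossH_cell p q) (crossH_skew p q) C hne hcl harcs
  rw [sumOn_congr (g := fun a => (windTerm (p,q) a - windTerm (p,q+1) a) - crossH p q a)
    (fun a _ => rfl), sumOn_sub, sumOn_sub] at h0
  unfold wind
  omega

end AuxProof5
noncomputable section AuxProof6

/-! ### the Green identity for tilings: `∑_C sp·χ = DisF C` -/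

lemma chi_arev {D : Set GArc} (hsym : ∀ a ∈ D, arev a ∈ D) (a : GArc) :
    chi D (arev a) = chi D a := by
  unfold chi
  by_cases h : a ∈ D
  · rw [if_pos (hsym a h), if_pos h]
  · rw [if_neg (fun hmem => h (by simpa [arev_arev] using hsym _ hmem)), if_neg h]

lemma cellA_horiz (x y : ℤ) : cellA ((x, y), (x + 1, y)) = (x, y) := by
  unfold cellA
  rw [if_pos (by simp)]
  simp [Prod.ext_iff]

lemma cellB_horiz (x y : ℤ) : cellB ((x, y), (x + 1, y)) = (x, y - 1) := by
  unfold cellB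
  rw [if_pos (by simp)]
  simp [Prod.ext_iff]

lemma cellA_vert (x y : ℤ) : cellA ((x, y), (x, y + 1)) = (x, y) := by
  unfold cellA
  rw [if_neg (by simp)]
  simp [Prod.ext_iff]

lemma cellB_vert (x y : ℤ) : cellB ((x, y), (x, y + 1)) = (x - 1, y) := by
  unfold cellB
  rw [if_neg (by simp)]
  simp [Prod.ext_iff]

lemma sp_bottom (p q : ℤ) : sp ((p, q), (p + 1, q)) = -colorSign (p, q) := by
  unfold sp; norm_num

lemma sp_top (p q : ℤ) : sp ((p, q + 1), (p + 1, q + 1)) = colorSign (p, q) := by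
  unfold sp colorSign; norm_num; split_ifs <;> omega

lemma sp_left (p q : ℤ) : sp ((p, q), (p, q + 1)) = colorSign (p, q) := by
  unfold sp; norm_num

lemma sp_right (p q : ℤ) : sp ((p + 1, q), (p + 1, q + 1)) = -colorSign (p, q) := by
  unfold sp colorSign; norm_num; split_ifs <;> omega

/-- around a cell of `F`, exactly one side is a central axis -/
lemma chi_sides_sum {F : Finset Vtx} {D : Set GArc} (hD : IsTiling F D) {p q : ℤ}
    (hc : ((p, q) : Vtx) ∈ F) :
    chi D ((p, q), (p + 1, q)) + chi D ((p, q + 1), (p + 1, q + 1))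
      + chi D ((p, q), (p, q + 1)) + chi D ((p + 1, q), (p + 1, q + 1)) = 1 := by
  obtain ⟨a0, ⟨ha0s, ha0D⟩, huni⟩ := hD.2.2 (p, q) hc
  have hoth : ∀ s, s ∈ sides ((p, q) : Vtx) → s ≠ a0 → chi D s = 0 := by
    intro s hs hne
    unfold chi
    rw [if_neg (fun hmem => hne (huni s ⟨hs, hmem⟩))]
  have hone : chi D a0 = 1 := by unfold chi; rw [if_pos ha0D]
  have hb : (((p, q), (p + 1, q)) : GArc) ∈ sides ((p, q) : Vtx) := by
    unfold sides; simp
  have ht : (((p, q + 1), (p + 1, q + 1)) : GArc) ∈ sides ((p, q) : Vtx) := by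
    unfold sides; simp
  have hl : (((p, q), (p, q + 1)) : GArc) ∈ sides ((p, q) : Vtx) := by
    unfold sides; simp
  have hr : (((p + 1, q), (p + 1, q + 1)) : GArc) ∈ sides ((p, q) : Vtx) := by
    unfold sides; simp
  unfold sides at ha0s
  simp only [List.mem_cons, List.not_mem_nil, or_false] at ha0s
  rcases ha0s with h | h | h | h <;> subst h
  · rw [hone, hoth _ ht (fun h => by simp only [Prod.mk.injEq] at h; omega),
      hoth _ hl (fun h => by simp only [Prod.mk.injEq] at h; omega),
      hoth _ hr (fun h => by simp only [Prod.mk.injEq] at h; omega)]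
    all_goals norm_num
  · rw [hoth _ hb (fun h => by simp only [Prod.mk.injEq] at h; omega), hone,
      hoth _ hl (fun h => by simp only [Prod.mk.injEq] at h; omega),
      hoth _ hr (fun h => by simp only [Prod.mk.injEq] at h; omega)]
    all_goals norm_num
  · rw [hoth _ hb (fun h => by simp only [Prod.mk.injEq] at h; omega),
      hoth _ ht (fun h => by simp only [Prod.mk.injEq] at h; omega), hone,
      hoth _ hr (fun h => by simp only [Prod.mk.injEq] at h; omega)]
    all_goals norm_num
  · rw [hoth _ hb (fun h => by simp only [Prod.mk.injEq] at h; omega),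
      hoth _ ht (fun h => by simp only [Prod.mk.injEq] at h; omega),
      hoth _ hl (fun h => by simp only [Prod.mk.injEq] at h; omega), hone]
    all_goals norm_num

/-- around a cell not in `F`, no side is a central axis -/
lemma chi_sides_zero {F : Finset Vtx} {D : Set GArc} (hD : IsTiling F D) {p q : ℤ}
    (hc : ((p, q) : Vtx) ∉ F) :
    chi D ((p, q), (p + 1, q)) = 0 ∧ chi D ((p, q + 1), (p + 1, q + 1)) = 0
      ∧ chi D ((p, q), (p, q + 1)) = 0 ∧ chi D ((p + 1, q), (p + 1, q + 1)) = 0 := by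
  refine ⟨?_, ?_, ?_, ?_⟩ <;> (unfold chi)
  · rw [if_neg (fun hmem => hc (by
      have := (hD.2.1 _ hmem).2.1
      rwa [cellA_horiz] at this))]
  · rw [if_neg (fun hmem => hc (by
      have := (hD.2.1 _ hmem).2.2
      rw [cellB_horiz] at this
      simpa using this))]
  · rw [if_neg (fun hmem => hc (by
      have := (hD.2.1 _ hmem).2.1
      rwa [cellA_vert] at this))]
  · rw [if_neg (fun hmem => hc (by
      have := (hD.2.1 _ hmem).2.2
      rw [cellB_vert] at this
      simpa using this))]

def rhoT (F : Finset Vtx) (D : Set GArc) (a : GArc) : ℤ :=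
  sp a * chi D a + ∑ c ∈ F, windTerm c a * colorSign c

lemma windTerm_horiz_zero (c : Vtx) (x x' y : ℤ) : windTerm c ((x, y), (x', y)) = 0 := by
  unfold windTerm
  split_ifs <;> simp

lemma rhoT_cell {F : Finset Vtx} {D : Set GArc} (hD : IsTiling F D) :
    CellZero (rhoT F D) := by
  intro p q
  unfold rhoT
  have hwb : ∀ c : Vtx, windTerm c ((p, q), (p + 1, q)) = 0 :=
    fun c => windTerm_horiz_zero c p (p + 1) q
  have hwt : ∀ c : Vtx, windTerm c ((p, q + 1), (p + 1, q + 1)) = 0 :=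
    fun c => windTerm_horiz_zero c p (p + 1) (q + 1)
  have hsum : ∑ c ∈ F, windTerm c ((p + 1, q), (p + 1, q + 1)) * colorSign c
      - ∑ c ∈ F, windTerm c ((p, q), (p, q + 1)) * colorSign c
      = (if ((p, q) : Vtx) ∈ F then colorSign ((p, q) : Vtx) else 0) := by
    rw [← Finset.sum_sub_distrib]
    have hpt : ∀ c ∈ F, windTerm c ((p + 1, q), (p + 1, q + 1)) * colorSign c
        - windTerm c ((p, q), (p, q + 1)) * colorSign c
        = if c = ((p, q) : Vtx) then colorSign c else 0 := by
      intro c _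
      obtain ⟨cx, cy⟩ := c
      have h1 : windTerm ((cx, cy) : Vtx) ((p + 1, q), (p + 1, q + 1))
          = if cx < p + 1 ∧ q = cy then 1 else 0 := by
        unfold windTerm; norm_num
        all_goals (split_ifs <;> omega)
      have h2 : windTerm ((cx, cy) : Vtx) ((p, q), (p, q + 1))
          = if cx < p ∧ q = cy then 1 else 0 := by
        unfold windTerm; norm_num
        all_goals (split_ifs <;> omega)
      rw [h1, h2]
      simp only [Prod.mk.injEq]
      split_ifs <;> (try ring) <;> omega
    rw [Finset.sum_congr rfl hpt]
    exact Finset.sum_ite_eq' F ((p, q) : Vtx) colorSign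
  rw [sp_bottom, sp_top, sp_right, sp_left]
  simp only [hwb, hwt, zero_mul, Finset.sum_const_zero]
  by_cases hmem : ((p, q) : Vtx) ∈ F
  · have hs := chi_sides_sum hD hmem
    rw [if_pos hmem] at hsum
    linear_combination hsum - (colorSign ((p : ℤ), q)) * hs
  · obtain ⟨h1, h2, h3, h4⟩ := chi_sides_zero hD hmem
    rw [if_neg hmem] at hsum
    rw [h1, h2, h3, h4]
    linear_combination hsum

lemma rhoT_skew {F : Finset Vtx} {D : Set GArc} (hD : IsTiling F D) :
    ∀ a, IsArc a → rhoT F D (arev a) = -rhoT F D a := by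
  intro a ha
  unfold rhoT
  rw [sp_arev ha, chi_arev hD.1]
  have : ∑ c ∈ F, windTerm c (arev a) * colorSign c
      = -∑ c ∈ F, windTerm c a * colorSign c := by
    rw [← Finset.sum_neg_distrib]
    exact Finset.sum_congr rfl (fun c _ => by rw [windTerm_arev]; ring)
  rw [this]
  ring

lemma sumOn_finsetSum (g : Vtx → GArc → ℤ) (F : Finset Vtx) (C : List Vtx) :
    sumOn (fun a => ∑ c ∈ F, g c a) C = ∑ c ∈ F, sumOn (g c) C := by
  unfold sumOn
  induction arcsOf C with
  | nil => simp
  | cons a l ih => simp [ih, Finset.sum_add_distrib]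

lemma sumOn_mul_const (f : GArc → ℤ) (k : Vtx → ℤ) (c : Vtx) (C : List Vtx) :
    sumOn (fun a => f a * k c) C = sumOn f C * k c := by
  unfold sumOn
  induction arcsOf C with
  | nil => simp
  | cons a l ih => simp [ih]; ring

/-- Green's identity: the spin-weighted number of axes crossed equals `DisF` -/
lemma green {F : Finset Vtx} {D : Set GArc} (hD : IsTiling F D) (C : List Vtx)
    (hne : C ≠ []) (hcl : C.head? = C.getLast?) (harcs : ∀ a ∈ arcsOf C, IsArc a) :
    sumOn (fun a => sp a * chi D a) C = DisF F C := by
  have h0 := sumOn_closed_of_cellZero (rhoT F D) (rhoT_cell hD) (rhoT_skew hD) C hne hcl harcs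
  unfold rhoT at h0
  rw [sumOn_add, sumOn_finsetSum] at h0
  have h1 : ∀ c ∈ F, sumOn (fun a => windTerm c a * colorSign c) C
      = wind C c * colorSign c := by
    intro c _
    rw [sumOn_mul_const (windTerm c) colorSign c C]
    rfl
  rw [Finset.sum_congr rfl h1] at h0
  unfold DisF
  linarith

end AuxProof6
noncomputable section AuxProof7

/-! ### index machinery and the vertex analysis -/

lemma mod_succ_inj {n j i : ℕ} (hj : j < n) (hi : i < n)
    (h : (j + 1) % n = (i + 1) % n) : j = i := by
  rcases Nat.lt_or_ge (j + 1) n with h1 | h1 <;> rcases Nat.lt_or_ge (i + 1) n with h2 | h2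
  · rw [Nat.mod_eq_of_lt h1, Nat.mod_eq_of_lt h2] at h; omega
  · have : i + 1 = n := by omega
    rw [Nat.mod_eq_of_lt h1, this, Nat.mod_self] at h; omega
  · have : j + 1 = n := by omega
    rw [Nat.mod_eq_of_lt h2, this, Nat.mod_self] at h; omega
  · omega

lemma sum_two_terms {f : ℕ → ℤ} {n i i' : ℕ} (hi : i < n) (hi' : i' < n) (hne : i ≠ i')
    (hz : ∀ j, j < n → j ≠ i → j ≠ i' → f j = 0) :
    ∑ j ∈ Finset.range n, f j = f i + f i' := by
  have hsub : ({i, i'} : Finset ℕ) ⊆ Finset.range n := by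
    intro x hx
    simp only [Finset.mem_insert, Finset.mem_singleton] at hx
    rcases hx with rfl | rfl <;> simp [Finset.mem_range, hi, hi']
  rw [← Finset.sum_subset hsub (fun x hx hnx => by
    simp only [Finset.mem_insert, Finset.mem_singleton, not_or] at hnx
    exact hz x (Finset.mem_range.mp hx) hnx.1 hnx.2)]
  rw [Finset.sum_pair hne]

lemma crossV_unit {p q : ℤ} {a : GArc} (ha : IsArc a) (h : crossV p q a ≠ 0) :
    a = ((p + 1, q), (p + 1, q + 1)) ∨ a = ((p + 1, q + 1), (p + 1, q)) := by
  obtain ⟨⟨x1, y1⟩, ⟨x2, y2⟩⟩ := a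
  unfold IsArc at ha
  unfold crossV at h
  simp only [Prod.mk.injEq] at *
  split_ifs at h with hc
  · omega
  · omega

lemma crossH_unit {p q : ℤ} {a : GArc} (ha : IsArc a) (h : crossH p q a ≠ 0) :
    a = ((p, q + 1), (p + 1, q + 1)) ∨ a = ((p + 1, q + 1), (p, q + 1)) := by
  obtain ⟨⟨x1, y1⟩, ⟨x2, y2⟩⟩ := a
  unfold IsArc at ha
  unfold crossH at h
  simp only [Prod.mk.injEq] at *
  split_ifs at h with hc
  · omega
  · omega

set_option maxHeartbeats 4000000 in
/-- the local analysis at a vertex of an elementary cycle -/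
lemma key_vertex (w : Vtx → ℤ) (u v t : Vtx)
    (huv : IsArc (u, v)) (hvt : IsArc (v, t)) (hut : u ≠ t)
    (EN : w (v.1 - 1, v.2) - w (v.1, v.2)
      = crossV (v.1 - 1) v.2 (u, v) + crossV (v.1 - 1) v.2 (v, t))
    (ES : w (v.1 - 1, v.2 - 1) - w (v.1, v.2 - 1)
      = crossV (v.1 - 1) (v.2 - 1) (u, v) + crossV (v.1 - 1) (v.2 - 1) (v, t))
    (EE : w (v.1, v.2 - 1) - w (v.1, v.2)
      = crossH v.1 (v.2 - 1) (u, v) + crossH v.1 (v.2 - 1) (v, t))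
    (EW : w (v.1 - 1, v.2 - 1) - w (v.1 - 1, v.2)
      = crossH (v.1 - 1) (v.2 - 1) (u, v) + crossH (v.1 - 1) (v.2 - 1) (v, t)) :
    (w (cellA (v, t)) + w (cellB (v, t)) = w (cellA (u, v)) + w (cellB (u, v))) ∧
    (w (cellA (u, v)) - w (cellB (u, v)) = 1 ∨ w (cellA (u, v)) - w (cellB (u, v)) = -1) := by
  obtain ⟨p, q⟩ := v
  rcases isArc_cases' huv with rfl | rfl | rfl | rfl <;>
    rcases isArc_cases hvt with rfl | rfl | rfl | rfl <;>
    first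
      | exact absurd rfl hut
      | (simp only [crossV, crossH, cellA, cellB, show ((p:ℤ) - 1 ≠ p) from by omega, show ((p:ℤ) + 1 ≠ p) from by omega,
           show ((p:ℤ) ≠ p - 1) from by omega, show ((p:ℤ) ≠ p + 1) from by omega,
           show ((p:ℤ) - 1 ≠ p + 1) from by omega, show ((p:ℤ) + 1 ≠ p - 1) from by omega,
           show ((q:ℤ) - 1 ≠ q) from by omega, show ((q:ℤ) + 1 ≠ q) from by omega,
           show ((q:ℤ) ≠ q - 1) from by omega, show ((q:ℤ) ≠ q + 1) from by omega,
           show ((q:ℤ) - 1 ≠ q + 1) from by omega, show ((q:ℤ) + 1 ≠ q - 1) from by omega,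
           show (min ((p:ℤ) - 1) p = p - 1) from by omega,
           show (min ((p:ℤ)) (p - 1) = p - 1) from by omega,
           show (min ((p:ℤ)) (p + 1) = p) from by omega,
           show (min ((p:ℤ) + 1) p = p) from by omega,
           show (min ((q:ℤ) - 1) q = q - 1) from by omega,
           show (min ((q:ℤ)) (q - 1) = q - 1) from by omega,
           show (min ((q:ℤ)) (q + 1) = q) from by omega,
           show (min ((q:ℤ) + 1) q = q) from by omega,
           min_self, ne_eq, not_false_eq_true, not_true_eq_false,
           if_true, if_false, eq_self_iff_true, true_and, and_true, false_and, and_false,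
           if_neg, if_pos, ite_true, ite_false] at EN ES EE EW ⊢
         split_ifs at EN ES EE EW ⊢ <;> omega)

end AuxProof7
noncomputable section AuxProof8

lemma list_bound (l : List Vtx) : ∃ M : ℤ, ∀ v ∈ l, v.1 < M := by
  induction l with
  | nil => exact ⟨0, by simp⟩
  | cons a t ih =>
    obtain ⟨M, hM⟩ := ih
    refine ⟨max M (a.1 + 1), ?_⟩
    intro v hv
    rcases List.mem_cons.mp hv with rfl | hv
    · have := le_max_right M (v.1 + 1); omega
    · have := hM v hv
      have := le_max_left M (a.1 + 1); omega

lemma cellB_vert' (x y : ℤ) : cellB ((x, y + 1), (x, y)) = (x - 1, y) := by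
  unfold cellB
  rw [if_neg (by simp)]
  simp [Prod.ext_iff]

/-- every elementary grid cycle has windings of constant sign -/
lemma windSign (C : List Vtx) (hlen : 2 ≤ C.length) (hcl : C.head? = C.getLast?)
    (hnd : C.dropLast.Nodup) (harcs : ∀ a ∈ arcsOf C, IsArc a) :
    (∀ c : Vtx, wind C c ≤ 0) ∨ (∀ c : Vtx, 0 ≤ wind C c) := by
  classical
  set n := C.length - 1 with hn
  have hn1 : 1 ≤ n := by omega
  by_cases hsm : n ≤ 2
  · -- small cycles have zero winding
    left
    intro c
    have h0 : wind C c = 0 := by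
      interval_cases n
      · -- n = 1 : C = [a, b] with a = b
        obtain ⟨a, b, rfl⟩ := List.length_eq_two.mp (by omega : C.length = 2)
        have hab : a = b := by simpa using hcl
        subst hab
        show sumOn (windTerm c) [a, a] = 0
        rw [show ([a, a] : List Vtx) = [a] ++ [a] from rfl]
        unfold sumOn
        show windTerm c (a, a) + 0 = 0
        unfold windTerm
        split_ifs <;> ring
      · -- n = 2 : C = [a, b, a]
        obtain ⟨a, b, c', rfl⟩ := List.length_eq_three.mp (by omega : C.length = 3)
        have hac : a = c' := by simpa using hcl
        subst hac
        show sumOn (windTerm c) [a, b, a] = 0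
        rw [sumOn_cons_cons, sumOn_cons_cons, sumOn_single]
        rw [show ((b, a) : GArc) = arev (a, b) from rfl, windTerm_arev]
        ring
    omega
  · -- main case : n ≥ 3
    push_neg at hsm
    have hn3 : 3 ≤ n := hsm
    have hlenC : C.length = n + 1 := by omega
    have hCne : C ≠ [] := by intro h; rw [h] at hlen; simp at hlen
    set vi : ℕ → Vtx := fun j => C.getD (j % n) ((0 : ℤ), (0 : ℤ)) with hvi
    -- C[n] = C[0]
    have hwrap : C.getD n ((0 : ℤ), (0 : ℤ)) = C.getD 0 ((0 : ℤ), (0 : ℤ)) := by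
      have h1 : C.getLast? = some (C.getLast hCne) := List.getLast?_eq_getLast hCne
      rw [← hcl] at h1
      obtain ⟨v, l, rfl⟩ := List.exists_cons_of_ne_nil hCne
      simp only [List.head?_cons, Option.some.injEq] at h1
      rw [List.getLast_eq_getElem] at h1
      simp only [← hn] at h1
      rw [List.getD_eq_getElem _ _ (by omega), List.getD_eq_getElem _ _ (by omega)]
      simp only [List.getElem_cons_zero]
      exact h1.symm
    have hwrapE : C[n]'(by omega) = C[0]'(by omega) := by
      have h := hwrap
      rw [List.getD_eq_getElem _ _ (by omega), List.getD_eq_getElem _ _ (by omega)] at h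
      exact h
    have hvi_mod : ∀ j, vi (j % n) = vi j := by
      intro j
      simp only [hvi, Nat.mod_mod_of_dvd _ (dvd_refl n)]
    have hvi_inj : ∀ j k, j < n → k < n → vi j = vi k → j = k := by
      intro j k hj hk h
      simp only [hvi, Nat.mod_eq_of_lt hj, Nat.mod_eq_of_lt hk] at h
      rw [List.getD_eq_getElem _ _ (by omega), List.getD_eq_getElem _ _ (by omega)] at h
      have hdj : C[j] = C.dropLast[j]'(by simp [hlenC]; omega) := (List.getElem_dropLast _).symm
      have hdk : C[k] = C.dropLast[k]'(by simp [hlenC]; omega) := (List.getElem_dropLast _).symm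
      rw [hdj, hdk] at h
      exact (hnd.getElem_inj_iff).mp h
    have hrange : ∀ f : GArc → ℤ, sumOn f C = ∑ j ∈ Finset.range n, f (vi j, vi (j + 1)) := by
      intro f
      rw [sumOn_eq_range f C]
      rw [show C.length - 1 = n from rfl]
      apply Finset.sum_congr rfl
      intro j hj
      have hjn := Finset.mem_range.mp hj
      have h1 : vi j = C.getD j ((0 : ℤ), (0 : ℤ)) := by
        simp only [hvi, Nat.mod_eq_of_lt hjn]
      have h2 : vi (j + 1) = C.getD (j + 1) ((0 : ℤ), (0 : ℤ)) := by
        rcases Nat.lt_or_ge (j + 1) n with hlt | hge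
        · simp only [hvi, Nat.mod_eq_of_lt hlt]
        · have hj1 : j + 1 = n := by omega
          simp only [hvi, hj1, Nat.mod_self, hwrap]
      rw [h1, h2]
    have hmemarc : ∀ j, j < n → ((vi j, vi (j + 1)) : GArc) ∈ arcsOf C := by
      intro j hj
      have hzlen : (C.zip C.tail).length = n := by
        rw [List.length_zip, List.length_tail, hlenC]; omega
      have hjz : j < (C.zip C.tail).length := by rw [hzlen]; exact hj
      have hjt : j < C.tail.length := by rw [List.length_tail, hlenC]; omega
      have hmem : (C.zip C.tail)[j]'hjz ∈ arcsOf C := List.getElem_mem _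
      have hz : (C.zip C.tail)[j]'hjz = (C[j]'(by omega), C.tail[j]'hjt) :=
        List.getElem_zip ..
      have htl : C.tail[j]'hjt = C[j + 1]'(by omega) := List.getElem_tail ..
      have hview : ((vi j, vi (j + 1)) : GArc) = (C[j]'(by omega), C[j + 1]'(by omega)) := by
        congr 1
        · simp only [hvi, Nat.mod_eq_of_lt hj]
          exact List.getD_eq_getElem _ _ (by omega)
        · rcases Nat.lt_or_ge (j + 1) n with h1 | h1
          · simp only [hvi, Nat.mod_eq_of_lt h1]
            exact List.getD_eq_getElem _ _ (by omega)
          · have hj1 : j + 1 = n := by omega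
            simp only [hvi, hj1, Nat.mod_self]
            rw [List.getD_eq_getElem _ _ (by omega)]
            exact hwrapE.symm
      rw [hview, ← htl, ← hz]
      exact hmem
    have hIsArc : ∀ j, j < n → IsArc (vi j, vi (j + 1)) := fun j hj => harcs _ (hmemarc j hj)
    have hshift : ∀ j, ((vi (j + 1), vi (j + 2)) : GArc)
        = (vi ((j + 1) % n), vi ((j + 1) % n + 1)) := by
      intro j
      congr 1
      · exact (hvi_mod (j + 1)).symm
      · simp only [hvi]
        congr 1
        rw [Nat.mod_add_mod]
    have hIsArc' : ∀ j, IsArc (vi (j + 1), vi (j + 2)) := by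
      intro j
      rw [hshift j]
      exact hIsArc _ (Nat.mod_lt _ (by omega))
    have hnoback : ∀ i, i < n → vi i ≠ vi (i + 2) := by
      intro i hi h
      rw [← hvi_mod (i + 2)] at h
      have h2 : (i + 2) % n < n := Nat.mod_lt _ (by omega)
      have := hvi_inj i ((i + 2) % n) hi h2 h
      rcases Nat.lt_or_ge (i + 2) n with h3 | h3
      · rw [Nat.mod_eq_of_lt h3] at this; omega
      · have h4 : (i + 2) % n = i + 2 - n := by
          rw [Nat.mod_eq_sub_mod h3, Nat.mod_eq_of_lt (by omega)]
        omega
    -- occurrence two-term sums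
    have hocc : ∀ i, i < n → ∀ κ : GArc → ℤ,
        (∀ a, IsArc a → κ a ≠ 0 → a.1 = vi (i + 1) ∨ a.2 = vi (i + 1)) →
        ∑ j ∈ Finset.range n, κ (vi j, vi (j + 1))
          = κ (vi i, vi (i + 1)) + κ (vi (i + 1), vi (i + 2)) := by
      intro i hi κ htouch
      have hi' : (i + 1) % n < n := Nat.mod_lt _ (by omega)
      have hne : i ≠ (i + 1) % n := by
        intro h
        rcases Nat.lt_or_ge (i + 1) n with h1 | h1
        · rw [Nat.mod_eq_of_lt h1] at h; omega
        · have h2 : i + 1 = n := by omega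
          rw [h2, Nat.mod_self] at h; omega
      have hs2 : κ (vi ((i + 1) % n), vi ((i + 1) % n + 1)) = κ (vi (i + 1), vi (i + 2)) := by
        rw [← hshift i]
      rw [sum_two_terms (f := fun j => κ (vi j, vi (j + 1))) hi hi' hne ?_, hs2]
      intro j hj hji hji'
      by_contra hκ
      rcases htouch _ (hIsArc j hj) hκ with h | h
      · exact hji' (hvi_inj j _ hj hi' (h.trans (hvi_mod (i + 1)).symm))
      · apply hji
        have hmm : vi ((j + 1) % n) = vi ((i + 1) % n) :=
          (hvi_mod (j + 1)).trans (h.trans (hvi_mod (i + 1)).symm)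
        exact mod_succ_inj hj hi
          (hvi_inj _ _ (Nat.mod_lt _ (by omega)) (Nat.mod_lt _ (by omega)) hmm)
    -- the vertex analysis applied along the cycle
    have hkey : ∀ i, i < n →
        (wind C (cellA (vi (i + 1), vi (i + 2))) + wind C (cellB (vi (i + 1), vi (i + 2)))
          = wind C (cellA (vi i, vi (i + 1))) + wind C (cellB (vi i, vi (i + 1)))) ∧
        (wind C (cellA (vi i, vi (i + 1))) - wind C (cellB (vi i, vi (i + 1))) = 1 ∨
         wind C (cellA (vi i, vi (i + 1))) - wind C (cellB (vi i, vi (i + 1))) = -1) := by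
      intro i hi
      apply key_vertex (wind C) (vi i) (vi (i + 1)) (vi (i + 2)) (hIsArc i hi) (hIsArc' i)
        (hnoback i hi)
      · -- EN
        have h1 := wind_diff_V C ((vi (i + 1)).1 - 1) (vi (i + 1)).2
        rw [show (vi (i + 1)).1 - 1 + 1 = (vi (i + 1)).1 from by ring] at h1
        rw [hrange (crossV ((vi (i + 1)).1 - 1) (vi (i + 1)).2)] at h1
        rw [hocc i hi _ ?_] at h1
        · exact h1
        · intro a ha hκ
          rcases crossV_unit ha hκ with rfl | rfl
          · left; simp
          · right; simp
      · -- ES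
        have h1 := wind_diff_V C ((vi (i + 1)).1 - 1) ((vi (i + 1)).2 - 1)
        rw [show (vi (i + 1)).1 - 1 + 1 = (vi (i + 1)).1 from by ring] at h1
        rw [hrange (crossV ((vi (i + 1)).1 - 1) ((vi (i + 1)).2 - 1))] at h1
        rw [hocc i hi _ ?_] at h1
        · exact h1
        · intro a ha hκ
          rcases crossV_unit ha hκ with rfl | rfl
          · right; simp
          · left; simp
      · -- EE
        have h1 := wind_diff_H C hCne hcl harcs (vi (i + 1)).1 ((vi (i + 1)).2 - 1)
        rw [show (vi (i + 1)).2 - 1 + 1 = (vi (i + 1)).2 from by ring] at h1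
        rw [hrange (crossH (vi (i + 1)).1 ((vi (i + 1)).2 - 1))] at h1
        rw [hocc i hi _ ?_] at h1
        · exact h1
        · intro a ha hκ
          rcases crossH_unit ha hκ with rfl | rfl
          · left; simp
          · right; simp
      · -- EW
        have h1 := wind_diff_H C hCne hcl harcs ((vi (i + 1)).1 - 1) ((vi (i + 1)).2 - 1)
        rw [show (vi (i + 1)).2 - 1 + 1 = (vi (i + 1)).2 from by ring] at h1
        rw [hrange (crossH ((vi (i + 1)).1 - 1) ((vi (i + 1)).2 - 1))] at h1
        rw [hocc i hi _ ?_] at h1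
        · exact h1
        · intro a ha hκ
          rcases crossH_unit ha hκ with rfl | rfl
          · right; simp
          · left; simp
    -- the level pair is constant along the cycle
    have hSconst : ∀ j, j < n →
        wind C (cellA (vi j, vi (j + 1))) + wind C (cellB (vi j, vi (j + 1)))
          = wind C (cellA (vi 0, vi 1)) + wind C (cellB (vi 0, vi 1)) := by
      intro j
      induction j with
      | zero => intro _; rfl
      | succ k ih =>
        intro hk
        have hkn : k < n := by omega
        rw [(hkey k hkn).1]
        exact ih hkn
    -- far field
    obtain ⟨M, hM⟩ := list_bound C
    have hfar : ∀ c : Vtx, M ≤ c.1 → wind C c = 0 := by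
      intro c hc
      apply sumOn_zero_of
      intro a ha
      obtain ⟨a1, a2⟩ := a
      have h1 : a1 ∈ C := (List.of_mem_zip ha).1
      have h2 := hM a1 h1
      unfold windTerm
      rw [if_neg]
      intro hcond
      simp only [] at hcond
      omega
    -- the walk to infinity
    have hwalk : ∀ k : ℕ, ∀ c : Vtx, M - c.1 ≤ (k : ℤ) →
        wind C c = 0 ∨
        2 * wind C c + 1 = wind C (cellA (vi 0, vi 1)) + wind C (cellB (vi 0, vi 1)) ∨
        2 * wind C c - 1 = wind C (cellA (vi 0, vi 1)) + wind C (cellB (vi 0, vi 1)) := by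
      intro k
      induction k with
      | zero =>
        intro c hc
        norm_num at hc
        exact Or.inl (hfar c (by omega))
      | succ k ih =>
        intro c hc
        by_cases hcM : M ≤ c.1
        · exact Or.inl (hfar c hcM)
        · push_neg at hcM
          by_cases hz : ∀ j ∈ Finset.range n, crossV c.1 c.2 (vi j, vi (j + 1)) = 0
          · have hsum0 : ∑ j ∈ Finset.range n, crossV c.1 c.2 (vi j, vi (j + 1)) = 0 :=
              Finset.sum_eq_zero hz
            have hdiff := wind_diff_V C c.1 c.2
            rw [hrange (crossV c.1 c.2), hsum0] at hdiff
            have hceq : ((c.1, c.2) : Vtx) = c := by simp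
            rw [hceq] at hdiff
            have hih := ih (c.1 + 1, c.2) (by push_cast at hc ⊢; omega)
            have heq : wind C c = wind C (c.1 + 1, c.2) := by omega
            rw [heq]
            exact hih
          · push_neg at hz
            obtain ⟨j, hjmem, hjne⟩ := hz
            have hjn := Finset.mem_range.mp hjmem
            have haj := hIsArc j hjn
            have h1 := hSconst j hjn
            have h2 := (hkey j hjn).2
            rcases crossV_unit haj hjne with heq | heq
            · have hcB : cellB (vi j, vi (j + 1)) = c := by
                rw [heq, cellB_vert (c.1 + 1) c.2,
                  show c.1 + 1 - 1 = c.1 from by ring]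
              rw [hcB] at h1 h2
              omega
            · have hcB : cellB (vi j, vi (j + 1)) = c := by
                rw [heq, cellB_vert' (c.1 + 1) c.2,
                  show c.1 + 1 - 1 = c.1 from by ring]
              rw [hcB] at h1 h2
              omega
    have hall : ∀ c : Vtx, wind C c = 0 ∨
        2 * wind C c + 1 = wind C (cellA (vi 0, vi 1)) + wind C (cellB (vi 0, vi 1)) ∨
        2 * wind C c - 1 = wind C (cellA (vi 0, vi 1)) + wind C (cellB (vi 0, vi 1)) := by
      intro c
      exact hwalk (M - c.1).toNat c (by omega)
    rcases le_or_gt (wind C (cellA (vi 0, vi 1)) + wind C (cellB (vi 0, vi 1))) 0 with hS | hS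
    · left
      intro c
      have := hall c
      omega
    · right
      intro c
      have := hall c
      omega

end AuxProof8
noncomputable section AuxProof9

lemma list_sum_nonneg (f : GArc → ℤ) :
    ∀ l : List GArc, (∀ a ∈ l, 0 ≤ f a) → 0 ≤ (l.map f).sum := by
  intro l
  induction l with
  | nil => simp
  | cons b t ih =>
    intro h
    simp only [List.map_cons, List.sum_cons]
    have h1 := h b (by simp)
    have h2 := ih (fun y hy => h y (by simp [hy]))
    omega

lemma list_sum_zero_of_nonneg (f : GArc → ℤ) :
    ∀ l : List GArc, (∀ a ∈ l, 0 ≤ f a) → (l.map f).sum = 0 → ∀ a ∈ l, f a = 0 := by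
  intro l
  induction l with
  | nil => intro _ _ a ha; simp at ha
  | cons b t ih =>
    intro hnn hsum a ha
    simp only [List.map_cons, List.sum_cons] at hsum
    have hb : 0 ≤ f b := hnn b (by simp)
    have ht : 0 ≤ (t.map f).sum := list_sum_nonneg f t (fun y hy => hnn y (by simp [hy]))
    rcases List.mem_cons.mp ha with rfl | ha
    · omega
    · exact ih (fun y hy => hnn y (by simp [hy])) (by omega) a ha

lemma chi_nonneg (D : Set GArc) (a : GArc) : 0 ≤ chi D a := by
  unfold chi; split_ifs <;> omega

end AuxProof9
/-- a strongly critical elementary cycle is a cycle of `G_T` for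
every tiling `T`, and it cuts no tile of `T`. -/
theorem strongly_critical_cycle_in_GT_and_cuts_no_tile (F : Finset Vtx)
    (hF : IsFigure F) (ef : GArc → ℤ) (hef : IsEquilibrium F ef)
    (C : List Vtx) (hC : StronglyCriticalCycle F ef C)
    (D : Set GArc) (hD : IsTiling F D) :
    ∀ a ∈ arcsOf C, GTArc F ef D a ∧ chi D a = 0 := by
  obtain ⟨⟨⟨⟨hlen, hcl, harcsF⟩, hnd⟩, hcrit⟩, hsp1⟩ := hC
  obtain ⟨hskewF, heq⟩ := hef
  have hCne : C ≠ [] := by intro h; rw [h] at hlen; simp at hlen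
  have harcsIsArc : ∀ a ∈ arcsOf C, IsArc a := fun a ha => (harcsF a ha).1
  -- on the arcs of C, t = ef + sp
  have htC : ∀ a ∈ arcsOf C, tArc F ef a = ef a + sp a := by
    intro a ha
    unfold tArc
    split_ifs with h
    · rw [hsp1 a ha ⟨(harcsF a ha).1, h.1, h.2⟩]; ring
    · rfl
  have hsum : sumOn sp C + sumOn ef C = 0 := by
    have h0 : sumOn (tArc F ef) C = 0 := hcrit
    rw [sumOn_congr htC, sumOn_add] at h0
    omega
  -- DisF F C = 0
  have hDis : DisF F C = 0 := by
    rcases windSign C hlen hcl hnd harcsIsArc with hcw | hccw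
    · have h1 := heq C ⟨⟨hlen, hcl, harcsF⟩, hnd⟩ hcw
      omega
    · have helem : IsElemCycleF F C.reverse := by
        refine ⟨⟨by rw [List.length_reverse]; exact hlen, ?_, ?_⟩, ?_⟩
        · rw [List.head?_reverse, List.getLast?_reverse]; exact hcl.symm
        · intro a ha
          have h1 := harcsF (arev a) (mem_arcsOf_reverse ha)
          have h2 := arcF_arev h1
          rwa [arev_arev] at h2
        · exact nodup_reverse_dropLast C hCne hcl hnd
      have hclk : IsClockwise C.reverse := by
        intro c
        rw [wind_reverse]
        have := hccw c
        omega
      have h1 := heq C.reverse helem hclk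
      rw [sumOn_reverse sp C (fun a ha => sp_arev (harcsIsArc a ha)),
        sumOn_reverse ef C (fun a ha => hskewF a (harcsF a ha)),
        DisF_reverse] at h1
      omega
  -- Green: the cycle crosses no axis
  have hgreen : sumOn (fun a => sp a * chi D a) C = 0 := by
    rw [green hD C hCne hcl harcsIsArc, hDis]
  have hchi : sumOn (chi D) C = 0 := by
    rw [sumOn_congr (g := fun a => sp a * chi D a) ?_]
    · exact hgreen
    · intro a ha
      show chi D a = sp a * chi D a
      by_cases hmem : a ∈ D
      · have hint := hD.2.1 a hmem
        rw [hsp1 a ha ⟨hint.1, hint.2.1, hint.2.2⟩]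
        ring
      · simp [chi, hmem]
  have hchiz : ∀ a ∈ arcsOf C, chi D a = 0 :=
    list_sum_zero_of_nonneg (chi D) (arcsOf C) (fun a _ => chi_nonneg D a) hchi
  intro a ha
  refine ⟨⟨harcsF a ha, ?_⟩, hchiz a ha⟩
  unfold gT tArc
  rw [hchiz a ha]
  split_ifs with h
  · rw [hsp1 a ha ⟨(harcsF a ha).1, h.1, h.2⟩]; ring
  · ring
end

section
/- Let F be a figure with equilibrium function eq and base vertex w₀, and let v and v' be critically equivalent vertices of V_F (i.e., some critical cycle of G_F passes through both). Then for all h,h'∈H_F, h(v)−h'(v)=h(v')−h'(v'). -/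
open Classical

lemma arcsOf_cons_cons_s13 (x y : Vtx) (C : List Vtx) :
    arcsOf (x :: y :: C) = (x, y) :: arcsOf (y :: C) := rfl

lemma sum_map_sub' (f g : GArc → ℤ) : ∀ l : List GArc,
    (l.map (fun a => f a - g a)).sum = (l.map f).sum - (l.map g).sum := by
  intro l; induction l with
  | nil => simp
  | cons a l ih => simp [ih]; ring

lemma telesc (g : Vtx → ℤ) : ∀ (C : List Vtx) (x : Vtx),
    ((arcsOf (x :: C)).map (fun a => g a.2 - g a.1)).sum
      = g ((x :: C).getLast (List.cons_ne_nil _ _)) - g x := by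
  intro C
  induction C with
  | nil => intro x; simp [arcsOf]
  | cons y C ih =>
    intro x
    rw [arcsOf_cons_cons_s13]
    simp only [List.map_cons, List.sum_cons, ih y]
    rw [List.getLast_cons (List.cons_ne_nil _ _)]
    ring

lemma all_zero : ∀ (l : List ℤ), (∀ x ∈ l, 0 ≤ x) → l.sum = 0 → ∀ x ∈ l, x = 0 := by
  intro l
  induction l with
  | nil => simp
  | cons a l ih =>
    intro hpos hsum x hx
    have hsl : 0 ≤ l.sum := List.sum_nonneg (fun y hy => hpos y (List.mem_cons_of_mem _ hy))
    have ha : 0 ≤ a := hpos a List.mem_cons_self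
    rw [List.sum_cons] at hsum
    rcases List.mem_cons.mp hx with rfl | hx
    · omega
    · exact ih (fun y hy => hpos y (List.mem_cons_of_mem _ hy)) (by omega) x hx

lemma const_along (g : Vtx → ℤ) : ∀ (C : List Vtx) (z : Vtx),
    (∀ a ∈ arcsOf (z :: C), g a.2 = g a.1) → ∀ x ∈ z :: C, g x = g z := by
  intro C
  induction C with
  | nil =>
    intro z _ x hx
    rcases List.mem_cons.mp hx with rfl | hx
    · rfl
    · simp at hx
  | cons w C ih =>
    intro z harc x hx
    have hzw : g w = g z := harc (z, w) (by rw [arcsOf_cons_cons_s13]; exact List.mem_cons_self)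
    rcases List.mem_cons.mp hx with rfl | hx
    · rfl
    · have := ih w (fun a ha => harc a (by rw [arcsOf_cons_cons_s13]; exact List.mem_cons_of_mem _ ha)) x hx
      rw [this, hzw]

lemma bArc_le_tArc (F : Finset Vtx) (ef : GArc → ℤ) (a : GArc) :
    bArc F ef a ≤ tArc F ef a := by
  unfold bArc tArc; split_ifs <;> omega

lemma steps_eq_t (F : Finset Vtx) (ef : GArc → ℤ) (C : List Vtx) (h : Vtx → ℤ)
    (harcF : ∀ a ∈ arcsOf C, ArcF F a)
    (htele : ((arcsOf C).map (fun a => h a.2 - h a.1)).sum = 0)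
    (htsum : sumOn (tArc F ef) C = 0)
    (hh : ∀ a, ArcF F a →
      (h a.2 - h a.1 = bArc F ef a ∨ h a.2 - h a.1 = tArc F ef a)) :
    ∀ a ∈ arcsOf C, h a.2 - h a.1 = tArc F ef a := by
  have hz : ∀ x ∈ (arcsOf C).map (fun a => tArc F ef a - (h a.2 - h a.1)), x = 0 := by
    apply all_zero
    · intro x hx
      obtain ⟨a, ha, rfl⟩ := List.mem_map.mp hx
      rcases hh a (harcF a ha) with heq | heq
      · rw [heq]; have := bArc_le_tArc F ef a; omega
      · rw [heq]; omega
    · rw [sum_map_sub', htele]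
      simp only [sumOn] at htsum
      omega
  intro a ha
  have := hz _ (List.mem_map.mpr ⟨a, ha, rfl⟩)
  omega


/-- if `v` and `v'` lie on a common critical cycle, then
`h(v) - h'(v) = h(v') - h'(v')` for all `h, h' ∈ H_F`. -/
theorem critically_equivalent_height_difference (F : Finset Vtx)
    (hF : IsFigure F) (ef : GArc → ℤ) (hef : IsEquilibrium F ef)
    (w0 : Vtx) (hw0 : OnOuterBoundary F w0)
    (v v' : Vtx) (hvv' : ∃ C, CriticalCycle F ef C ∧ v ∈ C ∧ v' ∈ C)
    (h h' : Vtx → ℤ) (hh : InHF F ef w0 h) (hh' : InHF F ef w0 h') :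
    h v - h' v = h v' - h' v' := by
  obtain ⟨C, ⟨⟨⟨hlen, hhl, harcF⟩, _⟩, htsum⟩, hv, hv'⟩ := hvv'
  obtain ⟨z, C', rfl⟩ : ∃ z C', C = z :: C' := by
    cases C with
    | nil => simp at hlen
    | cons z C' => exact ⟨z, C', rfl⟩
  have hlast : (z :: C').getLast (List.cons_ne_nil _ _) = z := by
    rw [List.getLast?_eq_getLast (List.cons_ne_nil _ _)] at hhl
    simpa using hhl.symm
  have htele : ∀ g : Vtx → ℤ,
      ((arcsOf (z :: C')).map (fun a => g a.2 - g a.1)).sum = 0 := by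
    intro g; rw [telesc, hlast]; ring
  have hsh := steps_eq_t F ef (z :: C') h harcF (htele h) htsum hh.2
  have hsh' := steps_eq_t F ef (z :: C') h' harcF (htele h') htsum hh'.2
  have hconst := const_along (fun x => h x - h' x) C' z (fun a ha => by
    have h1 := hsh a ha
    have h2 := hsh' a ha
    omega)
  have e1 := hconst v hv
  have e2 := hconst v' hv'
  omega
end

section
/- Let F be a figure with equilibrium function eq and base vertex w₀, and let h,h'∈H_F. Then h≤h' if and only if h' can be obtained from h by a finite sequence of allowed upward flips at forced components distinct from U_∞; moreover, in this case h' can be reached from h by exactly Δ(h,h')/4 upward flips. -/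
open Classical

namespace Flip14

variable {F : Finset Vtx} {ef : GArc → ℤ}

/-! ### Basic arc lemmas -/

lemma isArc_arev {a : GArc} (h : IsArc a) : IsArc (arev a) := by
  unfold IsArc arev at *; dsimp at *; omega

lemma cellA_arev {a : GArc} (h : IsArc a) : cellA (arev a) = cellA a := by
  unfold IsArc at h
  unfold cellA arev; dsimp
  by_cases hh : a.1.2 = a.2.2
  · rw [if_pos hh.symm, if_pos hh, min_comm, hh]
  · rw [if_neg (fun q => hh q.symm), if_neg hh, min_comm]
    have : a.2.1 = a.1.1 := by omega
    rw [this]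

lemma cellB_arev {a : GArc} (h : IsArc a) : cellB (arev a) = cellB a := by
  unfold IsArc at h
  unfold cellB arev; dsimp
  by_cases hh : a.1.2 = a.2.2
  · rw [if_pos hh.symm, if_pos hh, min_comm, hh]
  · rw [if_neg (fun q => hh q.symm), if_neg hh, min_comm]
    have : a.2.1 = a.1.1 := by omega
    rw [this]

lemma colorSign_arev {a : GArc} (h : IsArc a) : colorSign a.2 = -colorSign a.1 := by
  unfold IsArc at h
  unfold colorSign
  have hpar : a.2.1 + a.2.2 = a.1.1 + a.1.2 + 1 ∨ a.2.1 + a.2.2 = a.1.1 + a.1.2 - 1 := by omega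
  split_ifs <;> omega

lemma sp_arev {a : GArc} (h : IsArc a) : sp (arev a) = -sp a := by
  have hcs := colorSign_arev h
  unfold sp arev; dsimp
  rw [hcs]; ring

lemma arcF_arev {a : GArc} (h : ArcF F a) : ArcF F (arev a) := by
  obtain ⟨h1, h2⟩ := h
  exact ⟨isArc_arev h1, by rw [cellA_arev h1, cellB_arev h1]; exact h2⟩

lemma tArc_arev (hskew : IsSkewOnF F ef) {a : GArc} (h : ArcF F a) :
    tArc F ef (arev a) = -bArc F ef a := by
  have h1 := h.1
  unfold tArc bArc
  rw [cellA_arev h1, cellB_arev h1, hskew a h, sp_arev h1]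
  split <;> ring

lemma bArc_arev (hskew : IsSkewOnF F ef) {a : GArc} (h : ArcF F a) :
    bArc F ef (arev a) = -tArc F ef a := by
  have h1 := h.1
  unfold tArc bArc
  rw [cellA_arev h1, cellB_arev h1, hskew a h, sp_arev h1]
  split <;> ring

lemma bArc_le_tArc (F : Finset Vtx) (ef : GArc → ℤ) (a : GArc) :
    bArc F ef a ≤ tArc F ef a := by
  unfold bArc tArc; split <;> omega

lemma tArc_sub_bArc_dvd (F : Finset Vtx) (ef : GArc → ℤ) (a : GArc) :
    tArc F ef a - bArc F ef a = 0 ∨ tArc F ef a - bArc F ef a = 4 := by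
  unfold bArc tArc; split <;> [right; left] <;> ring

lemma tArc_interior {a : GArc} (h : cellA a ∈ F ∧ cellB a ∈ F) :
    tArc F ef a = bArc F ef a + 4 := by
  unfold bArc tArc; rw [if_pos h, if_pos h]; ring

/-- endpoints of an arc of `G_F` are corners of an adjacent cell -/
lemma isCorner_of_arc {a : GArc} (h : IsArc a) :
    (isCorner a.1 (cellA a) ∧ isCorner a.2 (cellA a)) ∧
    (isCorner a.1 (cellB a) ∧ isCorner a.2 (cellB a)) := by
  unfold IsArc at h
  unfold cellA cellB isCorner
  by_cases hh : a.1.2 = a.2.2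
  · rw [if_pos hh, if_pos hh]; dsimp; omega
  · rw [if_neg hh, if_neg hh]; dsimp; omega

lemma mem_VF_of_arc {a : GArc} (h : ArcF F a) : a.1 ∈ VF F ∧ a.2 ∈ VF F := by
  obtain ⟨h1, h2⟩ := h
  have hc := isCorner_of_arc h1
  rcases h2 with h2 | h2
  · exact ⟨⟨cellA a, h2, hc.1.1⟩, ⟨cellA a, h2, hc.1.2⟩⟩
  · exact ⟨⟨cellB a, h2, hc.2.1⟩, ⟨cellB a, h2, hc.2.2⟩⟩


/-! ### List lemmas -/

lemma arcsOf_nil : arcsOf ([] : List Vtx) = [] := rfl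
lemma arcsOf_single (x : Vtx) : arcsOf [x] = [] := rfl
lemma arcsOf_cons_cons (x y : Vtx) (t : List Vtx) :
    arcsOf (x :: y :: t) = (x, y) :: arcsOf (y :: t) := rfl

lemma sumOn_cons_cons (g : GArc → ℤ) (x y : Vtx) (t : List Vtx) :
    sumOn g (x :: y :: t) = g (x, y) + sumOn g (y :: t) := by
  unfold sumOn; rw [arcsOf_cons_cons]; simp

/-- telescoping sum -/
lemma sumOn_telescope (φ : Vtx → ℤ) :
    ∀ (t : List Vtx) (x : Vtx), sumOn (fun a => φ a.2 - φ a.1) (x :: t)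
      = φ ((x :: t).getLast (by simp)) - φ x := by
  intro t
  induction t with
  | nil => intro x; simp [sumOn, arcsOf_single]
  | cons y t ih =>
    intro x
    rw [sumOn_cons_cons, ih y]
    have hg : (x :: y :: t).getLast (by simp) = (y :: t).getLast (by simp) :=
      List.getLast_cons (by simp)
    rw [hg]; ring

lemma sumOn_congr {g g' : GArc → ℤ} {l : List Vtx}
    (h : ∀ a ∈ arcsOf l, g a = g' a) : sumOn g l = sumOn g' l := by
  unfold sumOn; rw [List.map_congr_left h]

/-- if `f ≤ g` on a list and the sums agree then `f = g` on the list -/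
lemma eq_of_sum_eq_of_le {f g : GArc → ℤ} :
    ∀ (L : List GArc), (∀ a ∈ L, f a ≤ g a) → (L.map f).sum = (L.map g).sum →
      ∀ a ∈ L, f a = g a := by
  intro L
  induction L with
  | nil => simp
  | cons a L ih =>
    intro hle hsum b hb
    have h1 : f a ≤ g a := hle a (List.mem_cons_self)
    have h2 : (L.map f).sum ≤ (L.map g).sum :=
      List.sum_le_sum (fun x hx => hle x (List.mem_cons_of_mem a hx))
    simp only [List.map_cons, List.sum_cons] at hsum
    have h3 : f a = g a := by omega
    have h4 : (L.map f).sum = (L.map g).sum := by omega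
    rcases List.mem_cons.1 hb with rfl | hb
    · exact h3
    · exact ih (fun x hx => hle x (List.mem_cons_of_mem a hx)) h4 b hb

/-- head of list with ≥ 1 element written as cons -/
lemma head_eq_getLast_of_closed {l : List Vtx} (h2 : 2 ≤ l.length)
    (hc : l.head? = l.getLast?) :
    ∃ x t, l = x :: t ∧ t ≠ [] ∧ (x :: t).getLast (by simp) = x := by
  match l, h2 with
  | x :: y :: t, _ =>
    refine ⟨x, y :: t, rfl, by simp, ?_⟩
    have : (x :: y :: t).getLast? = some ((x :: y :: t).getLast (by simp)) := by
      rw [List.getLast?_eq_getLast]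
    rw [this] at hc
    simp only [List.head?_cons] at hc
    exact (Option.some_injective _ hc.symm).symm |>.symm

/-- decomposition of a non-nodup list -/
lemma exists_dup_decomp : ∀ (l : List Vtx), ¬ l.Nodup →
    ∃ xs v ys zs, l = xs ++ v :: ys ++ v :: zs := by
  intro l
  induction l with
  | nil => intro h; exact absurd List.nodup_nil h
  | cons w l ih =>
    intro h
    by_cases hw : w ∈ l
    · obtain ⟨ys, zs, rfl⟩ := List.append_of_mem hw
      exact ⟨[], w, ys, zs, rfl⟩
    · have : ¬ l.Nodup := fun hn => h (List.nodup_cons.2 ⟨hw, hn⟩)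
      obtain ⟨xs, v, ys, zs, rfl⟩ := ih this
      exact ⟨w :: xs, v, ys, zs, rfl⟩

/-- membership in arcs of an appended list -/
lemma arcsOf_append_mem : ∀ (p : List Vtx) (v : Vtx) (q : List Vtx) (a : GArc),
    a ∈ arcsOf (p ++ v :: q) ↔ a ∈ arcsOf (p ++ [v]) ∨ a ∈ arcsOf (v :: q) := by
  intro p
  induction p with
  | nil => intro v q a; simp [arcsOf_single]
  | cons x p ih =>
    intro v q a
    match p with
    | [] =>
      simp only [List.nil_append, List.cons_append, arcsOf_cons_cons]
      constructor
      · rintro h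
        rcases List.mem_cons.1 h with rfl | h
        · exact Or.inl (List.mem_cons_self)
        · rcases (ih v q a).1 h with h | h
          · exact Or.inl (by simpa [arcsOf_single] using Or.inr h)
          · exact Or.inr h
      · rintro (h | h)
        · rcases List.mem_cons.1 h with rfl | h
          · exact List.mem_cons_self
          · simp [arcsOf_single] at h
        · exact List.mem_cons_of_mem _ ((ih v q a).2 (Or.inr h))
    | y :: p' =>
      simp only [List.cons_append, arcsOf_cons_cons]
      rw [List.mem_cons, List.mem_cons]
      have := ih v q a
      simp only [List.cons_append] at this
      tauto
/-! ### Critical cycles force the `t` value -/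

variable {w0 : Vtx} {h h' : Vtx → ℤ}

lemma crit_forces_t (hh : InHF F ef w0 h) {C : List Vtx}
    (hC : CriticalCycle F ef C) : ∀ a ∈ arcsOf C, h a.2 - h a.1 = tArc F ef a := by
  obtain ⟨⟨⟨hlen, hclosed, harcs⟩, hnodup⟩, hsum⟩ := hC
  obtain ⟨x, t, rfl, hne, hlast⟩ := head_eq_getLast_of_closed hlen hclosed
  have htel : sumOn (fun a => h a.2 - h a.1) (x :: t) = 0 := by
    rw [sumOn_telescope, hlast, sub_self]
  intro a ha
  refine eq_of_sum_eq_of_le (f := fun a => h a.2 - h a.1) (g := tArc F ef)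
    (arcsOf (x :: t)) (fun b hb => ?_) ?_ a ha
  · have hbt := bArc_le_tArc F ef b
    rcases hh.2 b (harcs b hb) with hb' | hb' <;> omega
  · unfold sumOn at htel hsum; rw [htel, hsum]

lemma const_on_list {ψ : Vtx → ℤ} :
    ∀ (l : List Vtx) (x : Vtx), (∀ a ∈ arcsOf (x :: l), ψ a.1 = ψ a.2) →
      ∀ u ∈ x :: l, ψ u = ψ x := by
  intro l
  induction l with
  | nil => intro x _ u hu; rcases List.mem_singleton.1 hu with rfl; rfl
  | cons y t ih =>
    intro x hw u hu
    have hxy : ψ x = ψ y := hw (x, y) (by rw [arcsOf_cons_cons]; exact List.mem_cons_self)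
    rcases List.mem_cons.1 hu with rfl | hu
    · rfl
    · rw [ih y (fun a ha => hw a (by rw [arcsOf_cons_cons]; exact List.mem_cons_of_mem _ ha)) u hu, hxy]

/-- the difference of two height functions is constant on a critical cycle -/
lemma d_const_on_crit (hh : InHF F ef w0 h) (hh' : InHF F ef w0 h')
    {C : List Vtx} (hC : CriticalCycle F ef C) :
    ∀ u ∈ C, ∀ u' ∈ C, h' u - h u = h' u' - h u' := by
  have h1 := crit_forces_t hh hC
  have h2 := crit_forces_t hh' hC
  have hlen := hC.1.1.1
  match C, hlen with
  | x :: t, _ =>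
    intro u hu u' hu'
    have hconst : ∀ a ∈ arcsOf (x :: t),
        (fun v => h' v - h v) a.1 = (fun v => h' v - h v) a.2 := by
      intro a ha
      have := h1 a ha; have := h2 a ha
      dsimp; omega
    have e1 := const_on_list (ψ := fun v => h' v - h v) t x hconst u hu
    have e2 := const_on_list (ψ := fun v => h' v - h v) t x hconst u' hu'
    omega

/-- the difference of two height functions is constant on forced components -/
lemma d_const_eqvGen (hh : InHF F ef w0 h) (hh' : InHF F ef w0 h')
    {v v' : Vtx} (he : Relation.EqvGen (critRel F ef) v v') :
    h' v - h v = h' v' - h v' := by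
  induction he with
  | rel u u' hr =>
    obtain ⟨C, hC, hu, hu'⟩ := hr
    exact d_const_on_crit hh hh' hC u hu u' hu'
  | refl => rfl
  | symm _ _ _ ih => omega
  | trans _ _ _ _ _ ih1 ih2 => omega

lemma mem_fcomp_self {v : Vtx} (hv : v ∈ VF F) : v ∈ fcomp F ef v :=
  ⟨hv, Relation.EqvGen.refl v⟩

lemma fcomp_eq_of_mem {v x : Vtx} (hx : x ∈ fcomp F ef v) :
    fcomp F ef v = fcomp F ef x := by
  obtain ⟨hxV, hxe⟩ := hx
  ext y
  constructor
  · rintro ⟨hyV, hye⟩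
    exact ⟨hyV, Relation.EqvGen.trans _ _ _ (Relation.EqvGen.symm _ _ hxe) hye⟩
  · rintro ⟨hyV, hye⟩
    exact ⟨hyV, Relation.EqvGen.trans _ _ _ hxe hye⟩

lemma fcomp_subset_VF (v : Vtx) : fcomp F ef v ⊆ VF F := fun _ hy => hy.1

/-! ### t-walks -/

/-- a single `t`-arc step -/
def RT (F : Finset Vtx) (ef : GArc → ℤ) (h : Vtx → ℤ) (v v' : Vtx) : Prop :=
  ArcF F (v, v') ∧ h v' - h v = tArc F ef (v, v')

lemma reach_head : ∀ (l : List Vtx) (x : Vtx),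
    (∀ a ∈ arcsOf (x :: l), RT F ef h a.1 a.2) →
    ∀ u ∈ x :: l, Relation.ReflTransGen (RT F ef h) x u := by
  intro l
  induction l with
  | nil => intro x _ u hu; rcases List.mem_singleton.1 hu with rfl; rfl
  | cons y t ih =>
    intro x hw u hu
    have hxy : RT F ef h x y := hw (x, y) (by rw [arcsOf_cons_cons]; exact List.mem_cons_self)
    rcases List.mem_cons.1 hu with rfl | hu
    · rfl
    · exact Relation.ReflTransGen.head hxy
        (ih y (fun a ha => hw a (by rw [arcsOf_cons_cons]; exact List.mem_cons_of_mem _ ha)) u hu)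

lemma reach_last : ∀ (l : List Vtx) (x : Vtx),
    (∀ a ∈ arcsOf (x :: l), RT F ef h a.1 a.2) →
    ∀ u ∈ x :: l, Relation.ReflTransGen (RT F ef h) u ((x :: l).getLast (by simp)) := by
  intro l
  induction l with
  | nil => intro x _ u hu; rcases List.mem_singleton.1 hu with rfl; rfl
  | cons y t ih =>
    intro x hw u hu
    have hg : (x :: y :: t).getLast (by simp) = (y :: t).getLast (by simp) :=
      List.getLast_cons (by simp)
    rw [hg]
    have hxy : RT F ef h x y := hw (x, y) (by rw [arcsOf_cons_cons]; exact List.mem_cons_self)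
    have hw' : ∀ a ∈ arcsOf (y :: t), RT F ef h a.1 a.2 :=
      fun a ha => hw a (by rw [arcsOf_cons_cons]; exact List.mem_cons_of_mem _ ha)
    rcases List.mem_cons.1 hu with rfl | hu
    · exact Relation.ReflTransGen.head hxy (ih y hw' y (List.mem_cons_self))
    · exact ih y hw' u hu

/-- the arcs of a critical cycle are t-arcs (for any `h ∈ H_F`) -/
lemma crit_arcs_RT (hh : InHF F ef w0 h) {C : List Vtx}
    (hC : CriticalCycle F ef C) : ∀ a ∈ arcsOf C, RT F ef h a.1 a.2 := by
  intro a ha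
  have h1 := crit_forces_t hh hC a ha
  have h2 := hC.1.1.2.2 a ha
  exact ⟨h2, h1⟩

/-- along a closed walk, any two vertices are mutually reachable -/
lemma reach_of_closed {l : List Vtx} (h2 : 2 ≤ l.length)
    (hcl : l.head? = l.getLast?) (hw : ∀ a ∈ arcsOf l, RT F ef h a.1 a.2) :
    ∀ u ∈ l, ∀ u' ∈ l, Relation.ReflTransGen (RT F ef h) u u' := by
  obtain ⟨x, t, rfl, hne, hlast⟩ := head_eq_getLast_of_closed h2 hcl
  intro u hu u' hu'
  have r1 := reach_last (l := t) x hw u hu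
  rw [hlast] at r1
  exact r1.trans (reach_head t x hw u' hu')

/-- critical equivalence implies mutual t-reachability -/
lemma eqvGen_twoWayReach (hh : InHF F ef w0 h) {u v : Vtx}
    (he : Relation.EqvGen (critRel F ef) u v) :
    Relation.ReflTransGen (RT F ef h) u v ∧ Relation.ReflTransGen (RT F ef h) v u := by
  induction he with
  | rel a b hr =>
    obtain ⟨C, hC, ha, hb⟩ := hr
    have harcs := crit_arcs_RT hh hC
    have := reach_of_closed hC.1.1.1 hC.1.1.2.1 harcs
    exact ⟨this a ha b hb, this b hb a ha⟩
  | refl => exact ⟨.refl, .refl⟩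
  | symm _ _ _ ih => exact ⟨ih.2, ih.1⟩
  | trans _ _ _ _ _ ih1 ih2 => exact ⟨ih1.1.trans ih2.1, ih2.2.trans ih1.2⟩
/-! ### Closed t-walks live in a single forced component -/

lemma closedWalk_eqvGen (hh : InHF F ef w0 h) :
    ∀ (n : ℕ) (l : List Vtx), l.length ≤ n → 2 ≤ l.length →
      l.head? = l.getLast? → (∀ a ∈ arcsOf l, RT F ef h a.1 a.2) →
      ∀ u ∈ l, ∀ u' ∈ l, Relation.EqvGen (critRel F ef) u u' := by
  intro n
  induction n with
  | zero => intro l hn h2; omega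
  | succ n ih =>
    intro l hn h2 hcl hw
    by_cases hnd : l.dropLast.Nodup
    · -- `l` is an elementary cycle, and it is critical
      have harcs : ∀ a ∈ arcsOf l, ArcF F a := fun a ha => (hw a ha).1
      obtain ⟨x, t, rfl, hne, hlast⟩ := head_eq_getLast_of_closed h2 hcl
      have hsum : sumOn (tArc F ef) (x :: t) = 0 := by
        rw [← sumOn_congr (fun a ha => (hw a ha).2), sumOn_telescope, hlast, sub_self]
      have hcrit : CriticalCycle F ef (x :: t) := ⟨⟨⟨h2, hcl, harcs⟩, hnd⟩, hsum⟩
      intro u hu u' hu'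
      exact Relation.EqvGen.rel u u' ⟨x :: t, hcrit, hu, hu'⟩
    · obtain ⟨xs, v, ys, zs, hdec⟩ := exists_dup_decomp _ hnd
      have hlne : l ≠ [] := by intro hl; rw [hl] at h2; simp at h2
      have hldec : l = l.dropLast ++ [l.getLast hlne] := (List.dropLast_append_getLast hlne).symm
      set x := l.getLast hlne with hx
      have hdec' : l = xs ++ (v :: (ys ++ (v :: (zs ++ [x])))) := by
        rw [hldec, hdec]; simp
      -- head of l is x
      have hhead : l.head? = some x := by
        rw [hcl, List.getLast?_eq_getLast hlne]
      set l₁ : List Vtx := v :: (ys ++ [v]) with hl₁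
      set l₂ : List Vtx := xs ++ (v :: (zs ++ [x])) with hl₂
      have hlen : l.length = xs.length + ys.length + zs.length + 3 := by
        rw [hdec']; simp [List.length_append]; try omega
      -- arcs inclusions
      have harc1 : ∀ a ∈ arcsOf l₁, a ∈ arcsOf l := by
        intro a ha
        have m1 : a ∈ arcsOf ((v :: ys) ++ [v]) := by simpa using ha
        have m2 : a ∈ arcsOf ((v :: ys) ++ v :: (zs ++ [x])) :=
          (arcsOf_append_mem (v :: ys) v (zs ++ [x]) a).2 (Or.inl m1)
        have m3 : a ∈ arcsOf (v :: (ys ++ (v :: (zs ++ [x])))) := by simpa using m2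
        rw [hdec']
        exact (arcsOf_append_mem xs v (ys ++ (v :: (zs ++ [x]))) a).2 (Or.inr m3)
      have harc2 : ∀ a ∈ arcsOf l₂, a ∈ arcsOf l := by
        intro a ha
        rcases (arcsOf_append_mem xs v (zs ++ [x]) a).1 ha with hm | hm
        · rw [hdec']
          exact (arcsOf_append_mem xs v (ys ++ (v :: (zs ++ [x]))) a).2 (Or.inl hm)
        · have m2 : a ∈ arcsOf ((v :: ys) ++ v :: (zs ++ [x])) :=
            (arcsOf_append_mem (v :: ys) v (zs ++ [x]) a).2 (Or.inr hm)
          have m3 : a ∈ arcsOf (v :: (ys ++ (v :: (zs ++ [x])))) := by simpa using m2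
          rw [hdec']
          exact (arcsOf_append_mem xs v (ys ++ (v :: (zs ++ [x]))) a).2 (Or.inr m3)
      -- closedness and lengths
      have hg1 : l₁.getLast? = some v := by
        rw [hl₁, show v :: (ys ++ [v]) = (v :: ys) ++ [v] by simp, List.getLast?_concat]
      have hcl1 : l₁.head? = l₁.getLast? := by rw [hg1, hl₁]; rfl
      have hcl2 : l₂.head? = l₂.getLast? := by
        have hg : l₂.getLast? = some x := by
          rw [hl₂, show xs ++ (v :: (zs ++ [x])) = (xs ++ v :: zs) ++ [x] by simp,
            List.getLast?_concat]
        have hh2 : l₂.head? = l.head? := by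
          rw [hl₂, hdec']
          cases xs <;> simp
        rw [hh2, hhead, hg]
      have hlen1' : l₁.length = ys.length + 2 := by rw [hl₁]; simp
      have hlen2' : l₂.length = xs.length + zs.length + 2 := by
        rw [hl₂]; simp [List.length_append]; try omega
      have hlen1 : 2 ≤ l₁.length := by omega
      have hlen2 : 2 ≤ l₂.length := by omega
      have hble1 : l₁.length ≤ n := by omega
      have hble2 : l₂.length ≤ n := by omega
      have e1 := ih l₁ hble1 hlen1 hcl1 (fun a ha => hw a (harc1 a ha))
      have e2 := ih l₂ hble2 hlen2 hcl2 (fun a ha => hw a (harc2 a ha))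
      have hv1 : v ∈ l₁ := List.mem_cons_self
      have hv2 : v ∈ l₂ := by rw [hl₂]; simp
      -- every vertex of l is in l₁ or l₂
      have hmem : ∀ u ∈ l, u ∈ l₁ ∨ u ∈ l₂ := by
        intro u hu
        rw [hdec'] at hu
        simp only [List.mem_append, List.mem_cons] at hu
        rw [hl₁, hl₂]
        simp only [List.mem_append, List.mem_cons]
        tauto
      have key : ∀ u ∈ l, Relation.EqvGen (critRel F ef) u v := by
        intro u hu
        rcases hmem u hu with hm | hm
        · exact e1 u hm v hv1
        · exact e2 u hm v hv2
      intro u hu u' hu'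
      exact Relation.EqvGen.trans _ _ _ (key u hu)
        (Relation.EqvGen.symm _ _ (key u' hu'))

/-- a reachability chain yields a t-walk list -/
lemma reach_toList {u u' : Vtx} (hr : Relation.ReflTransGen (RT F ef h) u u') :
    ∃ l : List Vtx, l ≠ [] ∧ l.head? = some u ∧ l.getLast? = some u' ∧
      ∀ a ∈ arcsOf l, RT F ef h a.1 a.2 := by
  induction hr using Relation.ReflTransGen.head_induction_on with
  | refl => exact ⟨[u'], by simp, by simp, by simp, by simp [arcsOf_single]⟩
  | head hxy _ ih =>
    rename_i x y _
    obtain ⟨l, hne, hhd, hlast, hw⟩ := ih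
    match l, hne, hhd with
    | z :: t, _, hhd =>
      have hz : z = y := by simpa using hhd
      subst hz
      refine ⟨x :: z :: t, by simp, by simp, by simpa using hlast, ?_⟩
      intro a ha
      rw [arcsOf_cons_cons] at ha
      rcases List.mem_cons.1 ha with rfl | ha
      · exact hxy
      · exact hw a ha

/-- mutual t-reachability implies critical equivalence -/
lemma twoWayReach_eqvGen (hh : InHF F ef w0 h) {u u' : Vtx}
    (h1 : Relation.ReflTransGen (RT F ef h) u u')
    (h2 : Relation.ReflTransGen (RT F ef h) u' u) :
    Relation.EqvGen (critRel F ef) u u' := by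
  by_cases heq : u = u'
  · subst heq; exact Relation.EqvGen.refl u
  obtain ⟨l₁, hne1, hhd1, hlast1, hw1⟩ := reach_toList h1
  obtain ⟨l₂, hne2, hhd2, hlast2, hw2⟩ := reach_toList h2
  obtain ⟨z, t, rfl⟩ : ∃ z t, l₂ = z :: t := by
    cases l₂ with
    | nil => exact absurd rfl hne2
    | cons z t => exact ⟨z, t, rfl⟩
  have hz : z = u' := by simpa using hhd2
  have htne : t ≠ [] := by
    intro ht
    subst ht
    simp at hlast2
    exact heq (hz ▸ hlast2 : u' = u).symm
  have hgl : l₁.getLast hne1 = u' := by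
    have h0 := List.getLast?_eq_getLast hne1
    rw [h0] at hlast1
    exact Option.some_inj.1 hlast1
  have hldec : l₁ = l₁.dropLast ++ [u'] := by
    conv_lhs => rw [← List.dropLast_append_getLast hne1]
    rw [hgl]
  set L : List Vtx := l₁.dropLast ++ (u' :: t) with hL
  have harcs : ∀ a ∈ arcsOf L, RT F ef h a.1 a.2 := by
    intro a ha
    rcases (arcsOf_append_mem l₁.dropLast u' t a).1 ha with hm | hm
    · exact hw1 a (by rw [hldec]; exact hm)
    · exact hw2 a (by rw [hz]; exact hm)
  have hlenL : 2 ≤ L.length := by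
    rw [hL]
    have h1t : 1 ≤ t.length := by cases t; exact absurd rfl htne; simp
    simp [List.length_append]; omega
  have hdlne : l₁.dropLast ≠ [] := by
    intro hd
    rw [hd] at hldec
    simp at hldec
    rw [hldec] at hhd1
    simp at hhd1
    exact heq hhd1.symm
  have hheadL : L.head? = some u := by
    rw [hL, List.head?_append_of_ne_nil _ hdlne]
    rw [hldec, List.head?_append_of_ne_nil _ hdlne] at hhd1
    exact hhd1
  have hlastL : L.getLast? = some u := by
    rw [hL, List.getLast?_append_of_ne_nil (l₁ := l₁.dropLast) (by simp)]
    rw [← hz]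
    exact hlast2
  have hclosed : L.head? = L.getLast? := by rw [hheadL, hlastL]
  have huL : u ∈ L := by
    cases hLc : L with
    | nil => rw [hLc] at hheadL; simp at hheadL
    | cons a b =>
      rw [hLc] at hheadL
      simp at hheadL
      simp [hheadL]
  have hu'L : u' ∈ L := by rw [hL]; simp
  exact closedWalk_eqvGen hh L.length L le_rfl hlenL hclosed harcs u huL u' hu'L
/-! ### Steps of the difference function -/

lemma tArc_boundary {a : GArc} (hb : ¬(cellA a ∈ F ∧ cellB a ∈ F)) :
    tArc F ef a = bArc F ef a := by
  unfold tArc bArc; rw [if_neg hb, if_neg hb]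

/-- structure of a step of the difference function across an arc -/
lemma d_step (hh : InHF F ef w0 h) (hh' : InHF F ef w0 h') {a : GArc} (ha : ArcF F a) :
    (h' a.2 - h a.2) - (h' a.1 - h a.1) = 0 ∨
    ((h' a.2 - h a.2) - (h' a.1 - h a.1) = 4 ∧ (cellA a ∈ F ∧ cellB a ∈ F) ∧
      h a.2 - h a.1 = bArc F ef a ∧ h' a.2 - h' a.1 = tArc F ef a) ∨
    (h' a.2 - h a.2) - (h' a.1 - h a.1) = -4 := by
  by_cases hint : cellA a ∈ F ∧ cellB a ∈ F
  · have ht := tArc_interior (F := F) (ef := ef) hint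
    rcases hh.2 a ha with hb1 | hb1 <;> rcases hh'.2 a ha with hb2 | hb2
    · left; omega
    · right; left; exact ⟨by omega, hint, hb1, hb2⟩
    · right; right; omega
    · left; omega
  · have ht := tArc_boundary (F := F) (ef := ef) hint
    rcases hh.2 a ha with hb1 | hb1 <;> rcases hh'.2 a ha with hb2 | hb2 <;> left <;> omega

lemma d_step_dvd (hh : InHF F ef w0 h) (hh' : InHF F ef w0 h') {a : GArc} (ha : ArcF F a) :
    (4:ℤ) ∣ ((h' a.2 - h a.2) - (h' a.1 - h a.1)) := by
  rcases d_step hh hh' ha with h0 | ⟨h0, _⟩ | h0 <;> rw [h0] <;> decide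

/-! ### Connectivity of `G_F` and divisibility -/

lemma arcF_symm {x y : Vtx} (ha : ArcF F (x, y)) : ArcF F (y, x) :=
  arcF_arev (a := (x, y)) ha

/-- bottom side of cell `c` -/
lemma arcF_bottom {c : Vtx} (hc : c ∈ F) : ArcF F ((c.1, c.2), (c.1 + 1, c.2)) := by
  refine ⟨by unfold IsArc; dsimp; omega, Or.inl ?_⟩
  unfold cellA; dsimp
  rw [if_pos rfl]
  simpa [min_def] using hc

/-- left side of cell `c` -/
lemma arcF_left {c : Vtx} (hc : c ∈ F) : ArcF F ((c.1, c.2), (c.1, c.2 + 1)) := by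
  refine ⟨by unfold IsArc; dsimp; omega, Or.inl ?_⟩
  unfold cellA; dsimp
  rw [if_neg (by omega)]
  simpa [min_def] using hc

/-- right side of cell `c` -/
lemma arcF_right {c : Vtx} (hc : c ∈ F) : ArcF F ((c.1 + 1, c.2), (c.1 + 1, c.2 + 1)) := by
  refine ⟨by unfold IsArc; dsimp; omega, Or.inr ?_⟩
  unfold cellB; dsimp
  rw [if_neg (by omega)]
  simp only [min_def]
  have h1 : c.1 + 1 - 1 = c.1 := by ring
  rw [if_pos (by omega), h1]
  simpa using hc

/-- connectivity within one cell: every corner is connected to the base corner -/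
lemma conn_corner {c v : Vtx} (hc : c ∈ F) (hv : isCorner v c) :
    Relation.ReflTransGen (fun x y : Vtx => ArcF F (x, y)) (c.1, c.2) v := by
  obtain ⟨h1 | h1, h2 | h2⟩ := hv
  · have : v = (c.1, c.2) := Prod.ext h1 h2
    rw [this]
  · have : v = (c.1, c.2 + 1) := Prod.ext h1 h2
    rw [this]
    exact Relation.ReflTransGen.single (arcF_left hc)
  · have : v = (c.1 + 1, c.2) := Prod.ext h1 h2
    rw [this]
    exact Relation.ReflTransGen.single (arcF_bottom hc)
  · have : v = (c.1 + 1, c.2 + 1) := Prod.ext h1 h2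
    rw [this]
    exact Relation.ReflTransGen.head (arcF_bottom hc)
      (Relation.ReflTransGen.single (arcF_right hc))

lemma conn_symm {x y : Vtx}
    (hxy : Relation.ReflTransGen (fun x y : Vtx => ArcF F (x, y)) x y) :
    Relation.ReflTransGen (fun x y : Vtx => ArcF F (x, y)) y x :=
  haveI : Std.Symm (fun x y : Vtx => ArcF F (x, y)) := ⟨fun _ _ hab => arcF_symm hab⟩
  Relation.ReflTransGen.symmetric.symm _ _ hxy

/-- corners of 4-adjacent cells are connected -/
lemma conn_adj4 {c c' : Vtx} (hc : c ∈ F) (hc' : c' ∈ F) (hadj : adj4 c c') :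
    Relation.ReflTransGen (fun x y : Vtx => ArcF F (x, y)) (c.1, c.2) (c'.1, c'.2) := by
  unfold adj4 at hadj
  have h4 : (c'.1 = c.1 + 1 ∧ c'.2 = c.2) ∨ (c'.1 = c.1 - 1 ∧ c'.2 = c.2) ∨
      (c'.1 = c.1 ∧ c'.2 = c.2 + 1) ∨ (c'.1 = c.1 ∧ c'.2 = c.2 - 1) := by omega
  rcases h4 with ⟨e1, e2⟩ | ⟨e1, e2⟩ | ⟨e1, e2⟩ | ⟨e1, e2⟩
  · -- shared corner (c.1+1, c.2) = base of c'
    have : (c'.1, c'.2) = ((c.1 + 1 : ℤ), c.2) := Prod.ext e1 e2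
    rw [this]
    exact conn_corner hc ⟨Or.inr rfl, Or.inl rfl⟩
  · -- base of c is a corner of c'
    exact conn_symm (conn_corner hc' ⟨Or.inr (by omega), Or.inl (by omega)⟩)
  · have : (c'.1, c'.2) = (c.1, (c.2 + 1 : ℤ)) := Prod.ext e1 e2
    rw [this]
    exact conn_corner hc ⟨Or.inl rfl, Or.inr rfl⟩
  · exact conn_symm (conn_corner hc' ⟨Or.inl (by omega), Or.inr (by omega)⟩)

lemma conn_bases {c0 c1 : Vtx}
    (hcc : Relation.ReflTransGen (fun x y => x ∈ F ∧ y ∈ F ∧ adj4 x y) c0 c1) :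
    Relation.ReflTransGen (fun x y : Vtx => ArcF F (x, y)) (c0.1, c0.2) (c1.1, c1.2) := by
  induction hcc with
  | refl => exact Relation.ReflTransGen.refl
  | tail _ hadj ih => exact ih.trans (conn_adj4 hadj.1 hadj.2.1 hadj.2.2)

/-- every vertex of `V_F` is connected to `w0` in `G_F` -/
lemma conn_w0 (hF : IsFigure F) (hw0 : OnOuterBoundary F w0) {v : Vtx} (hv : v ∈ VF F) :
    Relation.ReflTransGen (fun x y : Vtx => ArcF F (x, y)) w0 v := by
  obtain ⟨c0, hc0, hcor0⟩ := hw0.1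
  obtain ⟨c, hc, hcor⟩ := hv
  have hbase := conn_bases (F := F) (hF.2.1 c0 hc0 c hc)
  exact ((conn_symm (conn_corner hc0 hcor0)).trans hbase).trans (conn_corner hc hcor)

/-- divisibility by 4 of the difference of two height functions -/
lemma d_dvd4 (hF : IsFigure F) (hw0 : OnOuterBoundary F w0)
    (hh : InHF F ef w0 h) (hh' : InHF F ef w0 h') {v : Vtx} (hv : v ∈ VF F) :
    (4:ℤ) ∣ (h' v - h v) := by
  have hconn := conn_w0 hF hw0 hv
  have hbase : (4:ℤ) ∣ (h' w0 - h w0) := by rw [hh.1, hh'.1]; decide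
  clear hv
  induction hconn with
  | refl => exact hbase
  | tail hstep harc ih =>
    have := d_step_dvd hh hh' harc
    dsimp at this
    omega

/-! ### Finiteness -/

lemma VF_finite (F : Finset Vtx) : (VF F).Finite := by
  have hsub : VF F ⊆ ⋃ c ∈ (F : Set Vtx), {v : Vtx | isCorner v c} := by
    rintro v ⟨c, hc, hcor⟩
    exact Set.mem_biUnion hc hcor
  refine Set.Finite.subset (Set.Finite.biUnion F.finite_toSet (fun c _ => ?_)) hsub
  refine Set.Finite.subset
    (Set.Finite.insert ((c.1, c.2) : Vtx) (Set.Finite.insert (c.1 + 1, c.2)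
      (Set.Finite.insert (c.1, c.2 + 1) (Set.finite_singleton (c.1 + 1, c.2 + 1))))) ?_
  rintro v ⟨h1 | h1, h2 | h2⟩ <;>
    simp only [Set.mem_insert_iff, Set.mem_singleton_iff] <;>
    [exact Or.inl (Prod.ext h1 h2); exact Or.inr (Or.inr (Or.inl (Prod.ext h1 h2)));
     exact Or.inr (Or.inl (Prod.ext h1 h2)); exact Or.inr (Or.inr (Or.inr (Prod.ext h1 h2)))]

lemma components_finite (F : Finset Vtx) (ef : GArc → ℤ) :
    {S : Set Vtx | IsForcedComponent F ef S}.Finite := by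
  have : {S : Set Vtx | IsForcedComponent F ef S} ⊆ (fcomp F ef) '' (VF F) := by
    rintro S ⟨v, hv, rfl⟩
    exact ⟨v, hv, rfl⟩
  exact Set.Finite.subset (Set.Finite.image _ (VF_finite F)) this
/-! ### A minimal element for a preorder on a finite set -/

lemma exists_min_pre (Q : Vtx → Vtx → Prop)
    (htr : ∀ {a b c}, Q a b → Q b c → Q a c) :
    ∀ (n : ℕ) (s : Finset Vtx), s.card ≤ n → s.Nonempty →
      ∃ u ∈ s, ∀ v ∈ s, Q v u → Q u v := by
  intro n
  induction n with
  | zero =>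
    intro s hcard hne
    obtain ⟨u, hu⟩ := hne
    have := Finset.card_pos.2 ⟨u, hu⟩
    omega
  | succ n ih =>
    intro s hcard hne
    classical
    obtain ⟨u, hu⟩ := hne
    by_cases hgood : ∀ v ∈ s, Q v u → Q u v
    · exact ⟨u, hu, hgood⟩
    push_neg at hgood
    obtain ⟨v, hv, hQvu, hnQuv⟩ := hgood
    set s' := s.filter (fun w => Q w u ∧ ¬ Q u w) with hs'
    have hvs' : v ∈ s' := Finset.mem_filter.2 ⟨hv, hQvu, hnQuv⟩
    have hus' : u ∉ s' := fun hm => ((Finset.mem_filter.1 hm).2.2) ((Finset.mem_filter.1 hm).2.1)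
    have hsub : s' ⊆ s := Finset.filter_subset _ _
    have hlt : s'.card < s.card :=
      Finset.card_lt_card ((Finset.ssubset_iff_of_subset hsub).2 ⟨u, hu, hus'⟩)
    obtain ⟨u', hu's', hmin⟩ := ih s' (by omega) ⟨v, hvs'⟩
    obtain ⟨hu's, hQu'u, hnQuu'⟩ := Finset.mem_filter.1 hu's'
    refine ⟨u', hu's, fun w hw hQwu' => ?_⟩
    have hws' : w ∈ s' :=
      Finset.mem_filter.2 ⟨hw, htr hQwu' hQu'u, fun hQuw => hnQuu' (htr hQuw hQwu')⟩
    exact hmin w hws' hQwu'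

/-! ### Delta lemmas -/

lemma compDiff_nonneg (g g' : Vtx → ℤ) (S : Set Vtx) : 0 ≤ compDiff g g' S := by
  unfold compDiff; split
  · exact abs_nonneg _
  · exact le_refl 0

lemma forced_nonempty {S : Set Vtx} (hS : IsForcedComponent F ef S) : S.Nonempty := by
  obtain ⟨v, hv, rfl⟩ := hS
  exact ⟨v, mem_fcomp_self hv⟩

lemma Delta_eq (h h' : Vtx → ℤ) :
    Delta F ef h h' = ∑ S ∈ (components_finite F ef).toFinset, compDiff h h' S := by
  unfold Delta
  rw [finsum_mem_congr (components_finite F ef).coe_toFinset.symm (fun _ _ => rfl),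
    finsum_mem_coe_finset]

lemma Delta_nonneg (h h' : Vtx → ℤ) : 0 ≤ Delta F ef h h' := by
  rw [Delta_eq]
  exact Finset.sum_nonneg (fun S _ => compDiff_nonneg h h' S)

lemma Delta_zero_of_eq {h h' : Vtx → ℤ} (heq : ∀ v ∈ VF F, h v = h' v) :
    Delta F ef h h' = 0 := by
  rw [Delta_eq]
  refine Finset.sum_eq_zero (fun S hS => ?_)
  have hSc : IsForcedComponent F ef S := ((components_finite F ef).mem_toFinset).1 hS
  have hSne : S.Nonempty := forced_nonempty hSc
  rw [compDiff, dif_pos hSne]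
  have hmem := hSne.some_mem
  obtain ⟨v, hv, rfl⟩ := hSc
  rw [heq _ (fcomp_subset_VF v hmem)]
  simp

lemma Delta_pos (hh : InHF F ef w0 h) (hh' : InHF F ef w0 h')
    {v0 : Vtx} (hv0 : v0 ∈ VF F) (hlt : h v0 < h' v0) : 0 < Delta F ef h h' := by
  rw [Delta_eq]
  have hU0 : fcomp F ef v0 ∈ (components_finite F ef).toFinset :=
    ((components_finite F ef).mem_toFinset).2 ⟨v0, hv0, rfl⟩
  have hpos : 0 < compDiff h h' (fcomp F ef v0) := by
    have hSne : (fcomp F ef v0).Nonempty := ⟨v0, mem_fcomp_self hv0⟩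
    rw [compDiff, dif_pos hSne]
    have hmem := hSne.some_mem
    have hdc := d_const_eqvGen hh hh' hmem.2
    rw [abs_sub_comm, abs_pos]
    omega
  calc (0:ℤ) < compDiff h h' (fcomp F ef v0) := hpos
    _ ≤ _ := Finset.single_le_sum (fun S _ => compDiff_nonneg h h' S) hU0

lemma Delta_flip (hh : InHF F ef w0 h) (hh' : InHF F ef w0 h')
    {u : Vtx} (hu : u ∈ VF F) {M : ℤ} (hM : 4 ≤ M)
    (hd : ∀ x ∈ fcomp F ef u, h' x - h x = M) :
    Delta F ef (flipUpAt (fcomp F ef u) h) h' = Delta F ef h h' - 4 := by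
  classical
  set U := fcomp F ef u with hU
  have hUmem : U ∈ (components_finite F ef).toFinset :=
    ((components_finite F ef).mem_toFinset).2 ⟨u, hu, rfl⟩
  have e1 : ∀ (g : Set Vtx → ℤ), ∑ S ∈ (components_finite F ef).toFinset, g S
      = g U + ∑ S ∈ (components_finite F ef).toFinset.erase U, g S :=
    fun g => (Finset.add_sum_erase _ g hUmem).symm
  rw [Delta_eq, Delta_eq, e1 (compDiff (flipUpAt U h) h'), e1 (compDiff h h')]
  have hrest : ∀ S ∈ (components_finite F ef).toFinset.erase U,
      compDiff (flipUpAt U h) h' S = compDiff h h' S := by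
    intro S hS
    have hSne : S ≠ U := (Finset.mem_erase.1 hS).1
    have hSc : IsForcedComponent F ef S :=
      ((components_finite F ef).mem_toFinset).1 (Finset.mem_of_mem_erase hS)
    have hSnem : S.Nonempty := forced_nonempty hSc
    rw [compDiff, dif_pos hSnem, compDiff, dif_pos hSnem]
    have hnotU : hSnem.some ∉ U := by
      intro hmem
      obtain ⟨v, hv, rfl⟩ := hSc
      have h1 : fcomp F ef v = fcomp F ef hSnem.some := fcomp_eq_of_mem hSnem.some_mem
      have h2 : fcomp F ef u = fcomp F ef hSnem.some := fcomp_eq_of_mem hmem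
      exact hSne (h1.trans h2.symm)
    rw [flipUpAt, Set.indicator_of_notMem hnotU]
    simp
  rw [Finset.sum_congr rfl hrest]
  have hUne : U.Nonempty := ⟨u, mem_fcomp_self hu⟩
  have hcU : compDiff (flipUpAt U h) h' U = compDiff h h' U - 4 := by
    rw [compDiff, dif_pos hUne, compDiff, dif_pos hUne]
    have hdu := hd _ hUne.some_mem
    rw [flipUpAt, Set.indicator_of_mem hUne.some_mem]
    rw [abs_of_nonpos (by omega), abs_of_nonpos (by omega)]
    ring
  rw [hcU]
  ring

/-! ### Existence of an allowed upward flip -/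

lemma exists_flip (hF : IsFigure F) (hskew : IsSkewOnF F ef)
    (hw0 : OnOuterBoundary F w0)
    (hh : InHF F ef w0 h) (hh' : InHF F ef w0 h')
    (hle : ∀ v ∈ VF F, h v ≤ h' v) {v0 : Vtx} (hv0 : v0 ∈ VF F) (hlt : h v0 < h' v0) :
    ∃ u ∈ VF F, 4 ≤ h' u - h u ∧
      fcomp F ef u ≠ fcomp F ef w0 ∧
      InHF F ef w0 (flipUpAt (fcomp F ef u) h) ∧
      (∀ v ∈ VF F, flipUpAt (fcomp F ef u) h v ≤ h' v) := by
  classical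
  have hv0' : v0 ∈ (VF_finite F).toFinset := ((VF_finite F).mem_toFinset).2 hv0
  obtain ⟨vmax, hvmaxF, hmax⟩ :=
    Finset.exists_max_image (VF_finite F).toFinset (fun v => h' v - h v) ⟨v0, hv0'⟩
  have hvmaxV : vmax ∈ VF F := ((VF_finite F).mem_toFinset).1 hvmaxF
  have hdmax : ∀ v ∈ VF F, h' v - h v ≤ h' vmax - h vmax := by
    intro v hv
    simpa using hmax v (((VF_finite F).mem_toFinset).2 hv)
  have hMpos : 0 < h' vmax - h vmax := by
    have h1 := hdmax v0 hv0
    omega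
  have hdvd : (4:ℤ) ∣ (h' vmax - h vmax) := d_dvd4 hF hw0 hh hh' hvmaxV
  have hM4 : 4 ≤ h' vmax - h vmax := by obtain ⟨k, hk⟩ := hdvd; omega
  set T := (VF_finite F).toFinset.filter (fun v => h' v - h v = h' vmax - h vmax) with hT
  have hvmaxT : vmax ∈ T := Finset.mem_filter.2 ⟨hvmaxF, rfl⟩
  obtain ⟨u, huT, hmin⟩ := exists_min_pre (Relation.ReflTransGen (RT F ef h))
    (fun {a b c} hab hbc => hab.trans hbc) T.card T le_rfl ⟨vmax, hvmaxT⟩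
  have huVF : u ∈ VF F := ((VF_finite F).mem_toFinset).1 (Finset.mem_filter.1 huT).1
  have hdu : h' u - h u = h' vmax - h vmax := (Finset.mem_filter.1 huT).2
  have hdU : ∀ x ∈ fcomp F ef u, h' x - h x = h' vmax - h vmax := by
    intro x hx
    have := d_const_eqvGen hh hh' hx.2
    omega
  -- the key claim: every arc entering U is interior with h following b
  have key : ∀ a : GArc, ArcF F a → a.2 ∈ fcomp F ef u → a.1 ∉ fcomp F ef u →
      (cellA a ∈ F ∧ cellB a ∈ F) ∧ h a.2 - h a.1 = bArc F ef a := by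
    intro a harc ha2 ha1
    have ha1V : a.1 ∈ VF F := (mem_VF_of_arc harc).1
    by_contra hbad
    -- then h follows t on a
    have ht : h a.2 - h a.1 = tArc F ef a := by
      rcases hh.2 a harc with hb | hb
      · by_cases hint : cellA a ∈ F ∧ cellB a ∈ F
        · exact absurd ⟨hint, hb⟩ hbad
        · rw [hb, tArc_boundary hint]
      · exact hb
    have hda2 : h' a.2 - h a.2 = h' vmax - h vmax := hdU a.2 ha2
    have hda1 : h' a.1 - h a.1 = h' vmax - h vmax := by
      rcases d_step hh hh' harc with h0 | ⟨h0, hint, hbb, _⟩ | h0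
      · omega
      · rw [ht, tArc_interior hint] at hbb; omega
      · have := hdmax a.1 ha1V
        omega
    have ha1T : a.1 ∈ T :=
      Finset.mem_filter.2 ⟨((VF_finite F).mem_toFinset).2 ha1V, hda1⟩
    have hRT : RT F ef h a.1 a.2 := ⟨harc, ht⟩
    have hreach : Relation.ReflTransGen (RT F ef h) a.2 u :=
      (eqvGen_twoWayReach hh ha2.2).2
    have hQ1 : Relation.ReflTransGen (RT F ef h) a.1 u :=
      Relation.ReflTransGen.head hRT hreach
    have hQ2 := hmin a.1 ha1T hQ1
    have heqv := twoWayReach_eqvGen hh hQ2 hQ1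
    exact ha1 ⟨ha1V, heqv⟩
  -- U is not the component of w0
  have hw0V : w0 ∈ VF F := hw0.1
  have hdw0 : h' w0 - h w0 = 0 := by simp [hh.1, hh'.1]
  have hUne : fcomp F ef u ≠ fcomp F ef w0 := by
    intro hequ
    have hm : u ∈ fcomp F ef w0 := hequ ▸ mem_fcomp_self huVF
    have := d_const_eqvGen hh hh' hm.2
    omega
  have hw0U : w0 ∉ fcomp F ef u := by
    intro hmem
    exact hUne (fcomp_eq_of_mem hmem)
  -- the flip is allowed
  have hflip : InHF F ef w0 (flipUpAt (fcomp F ef u) h) := by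
    constructor
    · simp only [flipUpAt]
      rw [Set.indicator_of_notMem hw0U, hh.1]
      ring
    intro a harc
    by_cases h1 : a.1 ∈ fcomp F ef u <;> by_cases h2 : a.2 ∈ fcomp F ef u
    · simp only [flipUpAt]
      rw [Set.indicator_of_mem h1, Set.indicator_of_mem h2]
      rcases hh.2 a harc with hb | hb
      · left; omega
      · right; omega
    · -- leaving arc: h follows t, new diff is b
      have hkey := key (arev a) (arcF_arev harc) h1 h2
      have hint : cellA a ∈ F ∧ cellB a ∈ F := by
        have h0 := hkey.1
        rwa [cellA_arev harc.1, cellB_arev harc.1] at h0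
      have hbv : h a.1 - h a.2 = bArc F ef (arev a) := hkey.2
      rw [bArc_arev hskew harc] at hbv
      simp only [flipUpAt]
      rw [Set.indicator_of_mem h1, Set.indicator_of_notMem h2]
      left
      have := tArc_interior (F := F) (ef := ef) hint
      omega
    · -- entering arc: h follows b, new diff is t
      have hkey := key a harc h2 h1
      simp only [flipUpAt]
      rw [Set.indicator_of_notMem h1, Set.indicator_of_mem h2]
      right
      have := tArc_interior (F := F) (ef := ef) hkey.1
      omega
    · simp only [flipUpAt]
      rw [Set.indicator_of_notMem h1, Set.indicator_of_notMem h2]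
      rcases hh.2 a harc with hb | hb
      · left; omega
      · right; omega
  refine ⟨u, huVF, by omega, hUne, hflip, ?_⟩
  intro v hv
  simp only [flipUpAt]
  by_cases hvU : v ∈ fcomp F ef u
  · rw [Set.indicator_of_mem hvU]
    have := hdU v hvU
    omega
  · rw [Set.indicator_of_notMem hvU]
    have := hle v hv
    omega

/-! ### Main induction -/

lemma main_aux (hF : IsFigure F) (hskew : IsSkewOnF F ef) (hw0 : OnOuterBoundary F w0) :
    ∀ (N : ℕ) (h h' : Vtx → ℤ), InHF F ef w0 h → InHF F ef w0 h' →
      (∀ v ∈ VF F, h v ≤ h' v) → (Delta F ef h h').toNat ≤ N →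
      ∃ (n : ℕ) (f : ℕ → Vtx → ℤ), 4 * (n : ℤ) = Delta F ef h h' ∧
        f 0 = h ∧ (∀ v ∈ VF F, f n v = h' v) ∧ UpFlipSeq F ef w0 f n := by
  intro N
  induction N with
  | zero =>
    intro h h' hh hh' hle hN
    by_cases heq : ∀ v ∈ VF F, h v = h' v
    · exact ⟨0, fun _ => h, by rw [Delta_zero_of_eq heq]; ring, rfl,
        fun v hv => heq v hv, fun i hi => absurd hi (by omega)⟩
    · push_neg at heq
      obtain ⟨v0, hv0, hne0⟩ := heq
      have hlt : h v0 < h' v0 := lt_of_le_of_ne (hle v0 hv0) hne0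
      have := Delta_pos hh hh' hv0 hlt
      omega
  | succ N ih =>
    intro h h' hh hh' hle hN
    by_cases heq : ∀ v ∈ VF F, h v = h' v
    · exact ⟨0, fun _ => h, by rw [Delta_zero_of_eq heq]; ring, rfl,
        fun v hv => heq v hv, fun i hi => absurd hi (by omega)⟩
    push_neg at heq
    obtain ⟨v0, hv0, hne0⟩ := heq
    have hlt : h v0 < h' v0 := lt_of_le_of_ne (hle v0 hv0) hne0
    obtain ⟨u, huVF, hM4, hUne, hflip, hle₁⟩ := exists_flip hF hskew hw0 hh hh' hle hv0 hlt
    have hdU : ∀ x ∈ fcomp F ef u, h' x - h x = h' u - h u := by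
      intro x hx
      have := d_const_eqvGen hh hh' hx.2
      omega
    have hDflip : Delta F ef (flipUpAt (fcomp F ef u) h) h' = Delta F ef h h' - 4 :=
      Delta_flip hh hh' huVF hM4 hdU
    have hNN : (Delta F ef (flipUpAt (fcomp F ef u) h) h').toNat ≤ N := by
      have h0 := Delta_nonneg (F := F) (ef := ef) (flipUpAt (fcomp F ef u) h) h'
      omega
    obtain ⟨n, f, hfd, hf0, hfn, hseq⟩ := ih (flipUpAt (fcomp F ef u) h) h' hflip hh' hle₁ hNN
    refine ⟨n + 1, fun i => if i = 0 then h else f (i - 1), ?_, by simp, ?_, ?_⟩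
    · push_cast
      omega
    · intro v hv
      simpa using hfn v hv
    · intro i hi
      match i with
      | 0 =>
        refine ⟨fcomp F ef u, ⟨u, huVF, rfl⟩, hUne, by simpa using hh, ?_, ?_⟩
        · simpa [hf0] using hflip
        · simp [hf0]
      | (j + 1) =>
        obtain ⟨S, hS1, hS2, hS3, hS4, hS5⟩ := hseq j (by omega)
        exact ⟨S, hS1, hS2, by simpa using hS3, by simpa using hS4, by simpa using hS5⟩

end Flip14

/-- `h ≤ h'` on `V_F` iff `h'` is reachable from `h` by a finite
sequence of allowed upward flips at forced components distinct from `U_∞`;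
moreover, in this case, `Δ(h,h')/4` flips suffice. -/
theorem le_iff_upward_flips (F : Finset Vtx) (hF : IsFigure F)
    (ef : GArc → ℤ) (hef : IsEquilibrium F ef)
    (w0 : Vtx) (hw0 : OnOuterBoundary F w0)
    (h h' : Vtx → ℤ) (hh : InHF F ef w0 h) (hh' : InHF F ef w0 h') :
    ((∀ v ∈ VF F, h v ≤ h' v) ↔
      ∃ (n : ℕ) (f : ℕ → Vtx → ℤ), f 0 = h ∧ (∀ v ∈ VF F, f n v = h' v) ∧
        UpFlipSeq F ef w0 f n) ∧
    ((∀ v ∈ VF F, h v ≤ h' v) →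
      ∃ (n : ℕ) (f : ℕ → Vtx → ℤ), 4 * (n : ℤ) = Delta F ef h h' ∧
        f 0 = h ∧ (∀ v ∈ VF F, f n v = h' v) ∧ UpFlipSeq F ef w0 f n) := by
  have main : (∀ v ∈ VF F, h v ≤ h' v) →
      ∃ (n : ℕ) (f : ℕ → Vtx → ℤ), 4 * (n : ℤ) = Delta F ef h h' ∧
        f 0 = h ∧ (∀ v ∈ VF F, f n v = h' v) ∧ UpFlipSeq F ef w0 f n := by
    intro hle
    exact Flip14.main_aux hF hef.1 hw0 (Delta F ef h h').toNat h h' hh hh' hle le_rfl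
  refine ⟨⟨fun hle => ?_, fun hex => ?_⟩, main⟩
  · obtain ⟨n, f, _, hf0, hfn, hseq⟩ := main hle
    exact ⟨n, f, hf0, hfn, hseq⟩
  · obtain ⟨n, f, hf0, hfn, hseq⟩ := hex
    intro v hv
    have hmono : ∀ i, i ≤ n → f 0 v ≤ f i v := by
      intro i
      induction i with
      | zero => intro _; exact le_refl _
      | succ j ihj =>
        intro hj
        obtain ⟨S, _, _, _, _, hS5⟩ := hseq j (by omega)
        have hstep : f j v ≤ f (j + 1) v := by
          rw [hS5, flipUpAt]
          have : (0:ℤ) ≤ S.indicator (fun _ => (4:ℤ)) v := by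
            rw [Set.indicator_apply]
            split <;> omega
          omega
        exact le_trans (ihj (by omega)) hstep
    have hend := hmono n le_rfl
    rw [hf0] at hend
    rw [← hfn v hv]
    exact hend
end
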